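/- arXiv:0809.0813 — 6 statements merged into one kernel-verified Lean document; each statement's English description precedes it below -/
import Mathlib

section
/- For every real s, exp(s) ≤ s + exp(9s²/16). -/
open Real Finset

lemma taylor3_le_exp {x : ℝ} (hx : 0 ≤ x) : 1 + x + x^2/2 ≤ Real.exp x := by
  have := Real.sum_le_exp_of_nonneg hx 3
  simp [Finset.sum_range_succ, Nat.factorial] at this
  nlinarith [this]

lemma taylor5_le_exp {x : ℝ} (hx : 0 ≤ x) :
    1 + x + x^2/2 + x^3/6 + x^4/24 ≤ Real.exp x := by
  have := Real.sum_le_exp_of_nonneg hx 5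
  simp [Finset.sum_range_succ, Nat.factorial] at this
  nlinarith [this]

lemma exp_le_taylor5' {x : ℝ} (h0 : 0 ≤ x) (h1 : x ≤ 1) :
    Real.exp x ≤ 1 + x + x^2/2 + x^3/6 + x^4/24 + x^5/100 := by
  have := Real.exp_bound' h0 h1 (n := 5) (by norm_num)
  simp [Finset.sum_range_succ, Nat.factorial] at this
  nlinarith [this]

lemma exp_le_quad_of_nonpos {s : ℝ} (hs : s ≤ 0) : Real.exp s ≤ 1 + s + s^2/2 := by
  have h1 : 1 + (-s) + (-s)^2/2 ≤ Real.exp (-s) := taylor3_le_exp (by linarith)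
  have h2 : Real.exp s * Real.exp (-s) = 1 := by
    rw [← Real.exp_add]; simp
  have hpos : (0:ℝ) < 1 - s + s^2/2 := by nlinarith [sq_nonneg (s-1)]
  have h3 : Real.exp s * (1 - s + s^2/2) ≤ 1 := by
    calc Real.exp s * (1 - s + s^2/2) ≤ Real.exp s * Real.exp (-s) := by
          apply mul_le_mul_of_nonneg_left _ (Real.exp_nonneg s)
          nlinarith [h1]
      _ = 1 := h2
  nlinarith [h3, Real.exp_pos s, sq_nonneg (s^2)]

theorem exp_le_add_exp_nine_sixteenths_sq (s : ℝ) :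
    Real.exp s ≤ s + Real.exp (9 * s ^ 2 / 16) := by
  rcases le_or_gt s 0 with hs | hs
  · have h1 := exp_le_quad_of_nonpos hs
    have h2 : 1 + 9*s^2/16 ≤ Real.exp (9*s^2/16) := by
      have := Real.add_one_le_exp (9*s^2/16); linarith
    nlinarith [h1, h2, sq_nonneg s]
  rcases le_or_gt s (16/9) with hs' | hs'
  · -- middle range
    have hhalf0 : (0:ℝ) ≤ s/2 := by linarith
    have hhalf1 : s/2 ≤ 1 := by linarith
    have hP := exp_le_taylor5' hhalf0 hhalf1
    have hexps : Real.exp s = Real.exp (s/2) * Real.exp (s/2) := by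
      rw [← Real.exp_add]; ring_nf
    have hPsq : Real.exp s ≤
        (1 + s/2 + (s/2)^2/2 + (s/2)^3/6 + (s/2)^4/24 + (s/2)^5/100)^2 := by
      rw [hexps, sq]
      exact mul_le_mul hP hP (Real.exp_nonneg _) (by positivity)
    have hu : (0:ℝ) ≤ 9*s^2/16 := by positivity
    have hQ := taylor5_le_exp hu
    have hpoly : (1 + s/2 + (s/2)^2/2 + (s/2)^3/6 + (s/2)^4/24 + (s/2)^5/100)^2
        ≤ s + (1 + (9*s^2/16) + (9*s^2/16)^2/2 + (9*s^2/16)^3/6 + (9*s^2/16)^4/24) := by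
      nlinarith [sq_nonneg (s - 0.628), sq_nonneg (s*(s-0.628)), sq_nonneg (s^2*(s-0.628)),
        sq_nonneg (s^3*(s-0.628)), mul_nonneg hs.le hs.le, sq_nonneg s,
        mul_nonneg (mul_nonneg hs.le hs.le) hs.le, sq_nonneg (s^2 - 0.4), sq_nonneg (s^3),
        mul_nonneg hs.le (sub_nonneg.2 hs')]
    linarith [hPsq, hpoly, hQ]
  · have h1 : s ≤ 9*s^2/16 := by nlinarith
    have h2 : Real.exp s ≤ Real.exp (9*s^2/16) := Real.exp_le_exp.2 h1
    linarith
end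

section
/- Let (ψ_i)_{i=1}^N be adapted to a filtration (F_i), with deterministic μ_i ≥ 0 and ν_i > 0 such that almost surely E[ψ_i | F_{i−1}] ≤ μ_i and |ψ_i| ≤ ν_i. Then for every γ ≥ 0, Prob{ Σ_{i=1}^N ψ_i > Σ μ_i + γ·sqrt(Σ ν_i²) } ≤ exp(−γ²/2). -/
open MeasureTheory Real

lemma nonneg_of_deriv_nonneg (f f' : ℝ → ℝ) (hf : ∀ x, HasDerivAt f (f' x) x)
    (h0 : f 0 = 0) (hd : ∀ x, 0 ≤ x → 0 ≤ f' x) : ∀ a, 0 ≤ a → 0 ≤ f a := by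
  intro a ha
  have hmono : MonotoneOn f (Set.Ici 0) := by
    apply monotoneOn_of_deriv_nonneg (convex_Ici 0)
    · exact (continuous_iff_continuousAt.2 fun x => (hf x).continuousAt).continuousOn
    · exact fun x _ => ((hf x).differentiableAt).differentiableWithinAt
    · intro x hx
      rw [(hf x).deriv]
      rw [interior_Ici] at hx
      exact hd x (le_of_lt hx)
  have := hmono (Set.self_mem_Ici) (Set.mem_Ici.2 ha) ha
  linarith

lemma sinh_le_mul_cosh {a : ℝ} (ha : 0 ≤ a) : Real.sinh a ≤ a * Real.cosh a := by
  have h := nonneg_of_deriv_nonneg (fun x => x * Real.cosh x - Real.sinh x)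
    (fun x => x * Real.sinh x) ?_ (by simp) ?_ a ha
  · simpa using h
  · intro x
    have h1 : HasDerivAt (fun x : ℝ => x * Real.cosh x) (1 * Real.cosh x + x * Real.sinh x) x :=
      (hasDerivAt_id x).mul (Real.hasDerivAt_cosh x)
    have := h1.sub (Real.hasDerivAt_sinh x)
    exact this.congr_deriv (by ring)
  · intro x hx
    exact mul_nonneg hx (Real.sinh_nonneg_iff.2 hx)

lemma key_hoeffding {r : ℝ} (hr0 : 0 ≤ r) :
    ∀ a, 0 ≤ a → Real.cosh a + r * Real.sinh a ≤ Real.exp (r * a + a ^ 2 / 2) := by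
  set u : ℝ → ℝ := fun a => r * a + a ^ 2 / 2 with hu
  have hu' : ∀ a : ℝ, HasDerivAt u (r + a) a := by
    intro a
    have h1 : HasDerivAt (fun a : ℝ => r * a) r a := by
      simpa using (hasDerivAt_id a).const_mul r
    have h2 : HasDerivAt (fun a : ℝ => a ^ 2 / 2) a a := by
      have := (hasDerivAt_pow 2 a).div_const 2
      simpa using this
    exact h1.add h2
  have he : ∀ a : ℝ, HasDerivAt (fun a => Real.exp (u a)) (Real.exp (u a) * (r + a)) a :=
    fun a => (hu' a).exp
  have hd2 : ∀ a, 0 ≤ a →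
      0 ≤ ((r + a) ^ 2 + 1) * Real.exp (u a) - (Real.cosh a + r * Real.sinh a) := by
    intro a ha
    have h1 : Real.sinh a ≤ a * Real.cosh a := sinh_le_mul_cosh ha
    have h2 : Real.cosh a ≤ Real.exp (a ^ 2 / 2) := Real.cosh_le_exp_half_sq a
    have h3 : 1 + r * a ≤ Real.exp (r * a) := by linarith [Real.add_one_le_exp (r * a)]
    have h4 : Real.exp (r * a) * Real.exp (a ^ 2 / 2) = Real.exp (u a) := by
      rw [← Real.exp_add]
    have h5 : (0:ℝ) < Real.cosh a := Real.cosh_pos a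
    have h6 : (0:ℝ) < Real.exp (r * a) := Real.exp_pos _
    have h7 : (0:ℝ) < Real.exp (a ^ 2 / 2) := Real.exp_pos _
    have hc : Real.cosh a + r * Real.sinh a ≤ (1 + r * a) * Real.cosh a := by nlinarith
    have hc2 : (1 + r * a) * Real.cosh a ≤ Real.exp (r * a) * Real.exp (a ^ 2 / 2) := by nlinarith
    nlinarith [Real.exp_pos (u a), sq_nonneg (r + a)]
  have hstep1 : ∀ a, 0 ≤ a →
      0 ≤ (r + a) * Real.exp (u a) - (Real.sinh a + r * Real.cosh a) := by
    apply nonneg_of_deriv_nonneg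
      (fun a => (r + a) * Real.exp (u a) - (Real.sinh a + r * Real.cosh a))
      (fun a => ((r + a) ^ 2 + 1) * Real.exp (u a) - (Real.cosh a + r * Real.sinh a))
    · intro a
      have h1 : HasDerivAt (fun a : ℝ => r + a) 1 a := by
        simpa using (hasDerivAt_id a).const_add r
      have h2 := h1.mul (he a)
      have h3 := (Real.hasDerivAt_sinh a).add ((Real.hasDerivAt_cosh a).const_mul r)
      have := h2.sub h3
      exact this.congr_deriv (by ring)
    · simp [hu]
    · exact hd2
  have hstep2 : ∀ a, 0 ≤ a →
      0 ≤ Real.exp (u a) - (Real.cosh a + r * Real.sinh a) := by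
    apply nonneg_of_deriv_nonneg _
      (fun a => (r + a) * Real.exp (u a) - (Real.sinh a + r * Real.cosh a))
    · intro a
      have h3 := (Real.hasDerivAt_cosh a).add ((Real.hasDerivAt_sinh a).const_mul r)
      have := (he a).sub h3
      exact this.congr_deriv (by ring)
    · simp [hu]
    · exact hstep1
  intro a ha
  have := hstep2 a ha
  linarith

lemma convex_exp_bound {y : ℝ} (hy : |y| ≤ 1) (c : ℝ) :
    Real.exp (c * y) ≤ Real.cosh c + y * Real.sinh c := by
  have h1 : -1 ≤ y := neg_le_of_abs_le hy
  have h2 : y ≤ 1 := le_of_abs_le hy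
  have hconv := convexOn_exp.2 (Set.mem_univ c) (Set.mem_univ (-c))
    (show (0:ℝ) ≤ (1 + y) / 2 by linarith) (show (0:ℝ) ≤ (1 - y) / 2 by linarith)
    (show (1 + y) / 2 + (1 - y) / 2 = 1 by ring)
  have harg : ((1 + y) / 2) • c + ((1 - y) / 2) • (-c) = c * y := by simp; ring
  rw [harg] at hconv
  rw [Real.cosh_eq, Real.sinh_eq]
  calc Real.exp (c * y) ≤ ((1 + y) / 2) • Real.exp c + ((1 - y) / 2) • Real.exp (-c) := hconv
    _ = (Real.exp c + Real.exp (-c)) / 2 + y * ((Real.exp c - Real.exp (-c)) / 2) := by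
        simp only [smul_eq_mul]; ring

lemma Icc_succ_insert (n : ℕ) : Finset.Icc 1 (n+1) = insert (n+1) (Finset.Icc 1 n) := by
  ext x
  simp only [Finset.mem_Icc, Finset.mem_insert]
  omega

lemma sum_Icc_succ' (f : ℕ → ℝ) (n : ℕ) :
    ∑ i ∈ Finset.Icc 1 (n+1), f i = (∑ i ∈ Finset.Icc 1 n, f i) + f (n+1) := by
  rw [Icc_succ_insert, Finset.sum_insert (by simp), add_comm]

theorem martingale_deviation_bounded {Ω : Type*} {m0 : MeasurableSpace Ω}
    (P : Measure Ω) [IsProbabilityMeasure P] (ℱ : Filtration ℕ m0)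
    (N : ℕ) (ψ : ℕ → Ω → ℝ) (μ ν : ℕ → ℝ) (hμ : ∀ i, 0 ≤ μ i) (hν : ∀ i, 0 < ν i)
    (hmeas : ∀ i, StronglyMeasurable[ℱ i] (ψ i))
    (hint : ∀ i, Integrable (ψ i) P)
    (hcond : ∀ i ∈ Finset.Icc 1 N, ∀ᵐ ω ∂P, (P[ψ i | ℱ (i - 1)]) ω ≤ μ i)
    (hbdd : ∀ i ∈ Finset.Icc 1 N, ∀ᵐ ω ∂P, |ψ i ω| ≤ ν i)
    (γ : ℝ) (hγ : 0 ≤ γ) :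
    P {ω | ∑ i ∈ Finset.Icc 1 N, ψ i ω >
        ∑ i ∈ Finset.Icc 1 N, μ i + γ * Real.sqrt (∑ i ∈ Finset.Icc 1 N, (ν i) ^ 2)} ≤
      ENNReal.ofReal (Real.exp (-γ ^ 2 / 2)) := by
  rcases Nat.eq_zero_or_pos N with hN | hN
  · subst hN
    have hempty : Finset.Icc 1 0 = (∅ : Finset ℕ) := by decide
    have : {ω : Ω | ∑ i ∈ Finset.Icc 1 0, ψ i ω >
        ∑ i ∈ Finset.Icc 1 0, μ i + γ * Real.sqrt (∑ i ∈ Finset.Icc 1 0, (ν i) ^ 2)} = ∅ := by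
      ext ω
      simp [hempty]
    rw [this]
    simp
  -- main case
  set s2 := ∑ i ∈ Finset.Icc 1 N, (ν i) ^ 2 with hs2def
  have hs2 : 0 < s2 :=
    Finset.sum_pos (fun i _ => pow_pos (hν i) 2) (Finset.nonempty_Icc.2 hN)
  set s := Real.sqrt s2 with hsdef
  have hs : 0 < s := Real.sqrt_pos.2 hs2
  set t := γ / s with htdef
  have ht : 0 ≤ t := div_nonneg hγ hs.le
  have hts : t * s = γ := div_mul_cancel₀ γ hs.ne'
  have hss : s ^ 2 = s2 := Real.sq_sqrt hs2.le
  have ht2 : t ^ 2 * s2 = γ ^ 2 := by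
    rw [← hss, ← mul_pow, hts]
  have hmeas0 : ∀ i, StronglyMeasurable (ψ i) := fun i => (hmeas i).mono (ℱ.le i)
  have hbddAll : ∀ᵐ ω ∂P, ∀ i ∈ Finset.Icc 1 N, |ψ i ω| ≤ ν i :=
    (Filter.eventually_all_finset _).2 hbdd
  -- integrability of exponentials of partial sums
  have hIntExp : ∀ n, n ≤ N →
      Integrable (fun ω => Real.exp (∑ i ∈ Finset.Icc 1 n, t * ψ i ω)) P := by
    intro n hn
    have hsm : StronglyMeasurable (fun ω => Real.exp (∑ i ∈ Finset.Icc 1 n, t * ψ i ω)) := by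
      apply Real.continuous_exp.comp_stronglyMeasurable
      exact Finset.stronglyMeasurable_fun_sum _ (fun i _ => (hmeas0 i).const_mul t)
    refine Integrable.mono' (integrable_const (Real.exp (∑ i ∈ Finset.Icc 1 n, t * ν i)))
      hsm.aestronglyMeasurable ?_
    filter_upwards [hbddAll] with ω hω
    rw [Real.norm_eq_abs, abs_of_pos (Real.exp_pos _)]
    apply Real.exp_le_exp.2
    apply Finset.sum_le_sum
    intro i hi
    have hiN : i ∈ Finset.Icc 1 N := by
      simp only [Finset.mem_Icc] at hi ⊢; omega
    exact mul_le_mul_of_nonneg_left (le_of_abs_le (hω i hiN)) ht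
  have hIntG : ∀ j ∈ Finset.Icc 1 N, Integrable (fun ω => Real.exp (t * ψ j ω)) P := by
    intro j hj
    refine Integrable.mono' (integrable_const (Real.exp (t * ν j)))
      (Real.continuous_exp.comp_stronglyMeasurable
        ((hmeas0 j).const_mul t)).aestronglyMeasurable ?_
    filter_upwards [hbdd j hj] with ω hω
    rw [Real.norm_eq_abs, abs_of_pos (Real.exp_pos _)]
    exact Real.exp_le_exp.2 (mul_le_mul_of_nonneg_left (le_of_abs_le hω) ht)
  -- conditional MGF bound
  have hstep : ∀ j ∈ Finset.Icc 1 N,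
      ∀ᵐ ω ∂P, (P[fun ω => Real.exp (t * ψ j ω) | ℱ (j - 1)]) ω ≤
        Real.exp (t * μ j + t ^ 2 * ν j ^ 2 / 2) := by
    intro j hj
    have hc0 : 0 < ν j := hν j
    have ha0 : 0 ≤ t * ν j := mul_nonneg ht hc0.le
    set φ : Ω → ℝ := (fun _ => Real.cosh (t * ν j)) + (Real.sinh (t * ν j) / ν j) • ψ j with hφ
    have hφint : Integrable φ P := (integrable_const _).add ((hint j).smul _)
    have hle : (fun ω => Real.exp (t * ψ j ω)) ≤ᵐ[P] φ := by
      filter_upwards [hbdd j hj] with ω hω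
      have hy : |ψ j ω / ν j| ≤ 1 := by
        rw [abs_div, abs_of_pos hc0, div_le_one hc0]; exact hω
      have hcb := convex_exp_bound hy (t * ν j)
      have harg : (t * ν j) * (ψ j ω / ν j) = t * ψ j ω := by field_simp
      rw [harg] at hcb
      have hφω : φ ω = Real.cosh (t * ν j) + ψ j ω / ν j * Real.sinh (t * ν j) := by
        simp only [hφ, Pi.add_apply, Pi.smul_apply, smul_eq_mul]
        ring
      rw [hφω]
      exact hcb
    have h1 : P[fun ω => Real.exp (t * ψ j ω) | ℱ (j-1)] ≤ᵐ[P] P[φ | ℱ (j-1)] :=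
      condExp_mono (hIntG j hj) hφint hle
    have h2 : P[φ | ℱ (j-1)] =ᵐ[P]
        (fun _ => Real.cosh (t * ν j)) + (Real.sinh (t * ν j) / ν j) • P[ψ j | ℱ (j-1)] := by
      refine (condExp_add (integrable_const _) ((hint j).smul _) (ℱ (j-1))).trans ?_
      exact Filter.EventuallyEq.add (Filter.EventuallyEq.of_eq (condExp_const (ℱ.le (j-1)) _)) (condExp_smul _ _ _)
    have hsinh : 0 ≤ Real.sinh (t * ν j) := Real.sinh_nonneg_iff.2 ha0
    filter_upwards [h1, h2, hcond j hj] with ω hω1 hω2 hω3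
    rw [hω2] at hω1
    simp only [Pi.add_apply, Pi.smul_apply, smul_eq_mul] at hω1
    have hb1 : Real.sinh (t * ν j) / ν j * (P[ψ j | ℱ (j-1)]) ω
        ≤ Real.sinh (t * ν j) / ν j * μ j :=
      mul_le_mul_of_nonneg_left hω3 (div_nonneg hsinh hc0.le)
    have hk := key_hoeffding (r := μ j / ν j) (div_nonneg (hμ j) hc0.le) (t * ν j) ha0
    have e1 : (μ j / ν j) * (t * ν j) + (t * ν j) ^ 2 / 2 = t * μ j + t ^ 2 * ν j ^ 2 / 2 := by
      field_simp
    have e2 : Real.cosh (t * ν j) + Real.sinh (t * ν j) / ν j * μ j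
        = Real.cosh (t * ν j) + (μ j / ν j) * Real.sinh (t * ν j) := by ring
    rw [e1] at hk
    calc (P[fun ω => Real.exp (t * ψ j ω) | ℱ (j-1)]) ω
        ≤ Real.cosh (t * ν j) + Real.sinh (t * ν j) / ν j * μ j := by linarith
      _ ≤ Real.exp (t * μ j + t ^ 2 * ν j ^ 2 / 2) := by rw [e2]; exact hk
  -- MGF bound by induction
  have hmgf : ∀ n, n ≤ N → ∫ ω, Real.exp (∑ i ∈ Finset.Icc 1 n, t * ψ i ω) ∂P
      ≤ Real.exp (∑ i ∈ Finset.Icc 1 n, (t * μ i + t ^ 2 * ν i ^ 2 / 2)) := by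
    intro n
    induction n with
    | zero =>
      intro _
      have hempty : Finset.Icc 1 0 = (∅ : Finset ℕ) := by decide
      simp [hempty]
    | succ n ih =>
      intro hn1
      have hn : n ≤ N := Nat.le_of_succ_le hn1
      have hjmem : n + 1 ∈ Finset.Icc 1 N := by simp only [Finset.mem_Icc]; omega
      set F := fun ω => Real.exp (∑ i ∈ Finset.Icc 1 n, t * ψ i ω) with hF
      set G := fun ω => Real.exp (t * ψ (n+1) ω) with hG
      have hFmeas : StronglyMeasurable[ℱ n] F := by
        apply Real.continuous_exp.comp_stronglyMeasurable
        apply Finset.stronglyMeasurable_fun_sum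
        intro i hi
        exact ((hmeas i).mono (ℱ.mono (Finset.mem_Icc.1 hi).2)).const_mul t
      have hFint : Integrable F P := hIntExp n hn
      have hGint : Integrable G P := hIntG (n+1) hjmem
      have heq : F * G = fun ω => Real.exp (∑ i ∈ Finset.Icc 1 (n+1), t * ψ i ω) := by
        funext ω
        simp only [Pi.mul_apply, hF, hG]
        rw [sum_Icc_succ' (fun i => t * ψ i ω) n, Real.exp_add]
      have hFGint : Integrable (F * G) P := by
        rw [heq]; exact hIntExp (n+1) hn1
      have hpull : ∀ᵐ ω ∂P, (P[G | ℱ n]) ω ≤ Real.exp (t * μ (n+1) + t ^ 2 * ν (n+1) ^ 2 / 2) := by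
        have := hstep (n+1) hjmem
        simpa using this
      have key : ∫ ω, (F * G) ω ∂P
          ≤ (∫ ω, F ω ∂P) * Real.exp (t * μ (n+1) + t ^ 2 * ν (n+1) ^ 2 / 2) := by
        have e1 : ∫ ω, (F * G) ω ∂P = ∫ ω, (P[F * G | ℱ n]) ω ∂P :=
          (integral_condExp (ℱ.le n)).symm
        have e2 : P[F * G | ℱ n] =ᵐ[P] F * P[G | ℱ n] :=
          condExp_mul_of_stronglyMeasurable_left hFmeas hFGint hGint
        rw [e1, integral_congr_ae e2]
        have hmon : ∫ ω, (F * P[G | ℱ n]) ω ∂P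
            ≤ ∫ ω, F ω * Real.exp (t * μ (n+1) + t ^ 2 * ν (n+1) ^ 2 / 2) ∂P := by
          refine integral_mono_ae (integrable_condExp.congr e2) (hFint.mul_const _) ?_
          filter_upwards [hpull] with ω hω
          simp only [Pi.mul_apply]
          exact mul_le_mul_of_nonneg_left hω (Real.exp_pos _).le
        exact hmon.trans_eq (integral_mul_const _ _)
      have hsumeq : ∑ i ∈ Finset.Icc 1 (n+1), (t * μ i + t ^ 2 * ν i ^ 2 / 2)
          = (∑ i ∈ Finset.Icc 1 n, (t * μ i + t ^ 2 * ν i ^ 2 / 2))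
            + (t * μ (n+1) + t ^ 2 * ν (n+1) ^ 2 / 2) :=
        sum_Icc_succ' _ n
      calc ∫ ω, Real.exp (∑ i ∈ Finset.Icc 1 (n+1), t * ψ i ω) ∂P
          = ∫ ω, (F * G) ω ∂P := by rw [heq]
        _ ≤ (∫ ω, F ω ∂P) * Real.exp (t * μ (n+1) + t ^ 2 * ν (n+1) ^ 2 / 2) := key
        _ ≤ Real.exp (∑ i ∈ Finset.Icc 1 n, (t * μ i + t ^ 2 * ν i ^ 2 / 2))
              * Real.exp (t * μ (n+1) + t ^ 2 * ν (n+1) ^ 2 / 2) :=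
            mul_le_mul_of_nonneg_right (ih hn) (Real.exp_pos _).le
        _ = Real.exp (∑ i ∈ Finset.Icc 1 (n+1), (t * μ i + t ^ 2 * ν i ^ 2 / 2)) := by
            rw [hsumeq, Real.exp_add (∑ i ∈ Finset.Icc 1 n, (t * μ i + t ^ 2 * ν i ^ 2 / 2))
              (t * μ (n+1) + t ^ 2 * ν (n+1) ^ 2 / 2)]
  -- Chernoff
  set X : Ω → ℝ := fun ω => ∑ i ∈ Finset.Icc 1 N, ψ i ω with hX
  set b : ℝ := (∑ i ∈ Finset.Icc 1 N, μ i) + γ * s with hb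
  have hXexp : (fun ω => Real.exp (t * X ω))
      = fun ω => Real.exp (∑ i ∈ Finset.Icc 1 N, t * ψ i ω) := by
    funext ω
    rw [hX, Finset.mul_sum]
  have hXint : Integrable (fun ω => Real.exp (t * X ω)) P := by
    rw [hXexp]; exact hIntExp N le_rfl
  have hch := ProbabilityTheory.measure_ge_le_exp_mul_mgf (X := X) (μ := P) (t := t) b ht hXint
  have hmgfle : ProbabilityTheory.mgf X P t
      ≤ Real.exp (∑ i ∈ Finset.Icc 1 N, (t * μ i + t ^ 2 * ν i ^ 2 / 2)) := by
    have : ProbabilityTheory.mgf X P t = ∫ ω, Real.exp (t * X ω) ∂P := rfl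
    rw [this, hXexp]
    exact hmgf N le_rfl
  have hfinal : Real.exp (-t * b) * ProbabilityTheory.mgf X P t ≤ Real.exp (-γ ^ 2 / 2) := by
    have h1 : Real.exp (-t * b) * ProbabilityTheory.mgf X P t
        ≤ Real.exp (-t * b) * Real.exp (∑ i ∈ Finset.Icc 1 N, (t * μ i + t ^ 2 * ν i ^ 2 / 2)) :=
      mul_le_mul_of_nonneg_left hmgfle (Real.exp_pos _).le
    refine h1.trans ?_
    rw [← Real.exp_add]
    apply Real.exp_le_exp.2
    have hsum : ∑ i ∈ Finset.Icc 1 N, (t * μ i + t ^ 2 * ν i ^ 2 / 2)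
        = t * (∑ i ∈ Finset.Icc 1 N, μ i) + t ^ 2 * s2 / 2 := by
      rw [Finset.sum_add_distrib, ← Finset.mul_sum, ← Finset.sum_div, ← Finset.mul_sum]
    rw [hsum, hb]
    have : -t * ((∑ i ∈ Finset.Icc 1 N, μ i) + γ * s)
        + (t * (∑ i ∈ Finset.Icc 1 N, μ i) + t ^ 2 * s2 / 2)
        = -(t * s) * γ + t ^ 2 * s2 / 2 := by ring
    rw [this, hts, ht2]
    ring_nf
    linarith
  calc P {ω | X ω > b}
      ≤ P {ω | b ≤ X ω} := measure_mono (Set.setOf_subset_setOf.2 fun ω h => le_of_lt h)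
    _ = ENNReal.ofReal (P {ω | b ≤ X ω}).toReal := (ENNReal.ofReal_toReal (measure_ne_top P _)).symm
    _ ≤ ENNReal.ofReal (Real.exp (-γ ^ 2 / 2)) := ENNReal.ofReal_le_ofReal (hch.trans hfinal)
end

section
/- For 2 ≤ ρ < ∞, the function p(x) = ‖x‖_ρ² on ℝⁿ is continuously differentiable and satisfies p(x+y) ≤ p(x) + Dp(x)[y] + (ρ−1)·p(y) for all x, y ∈ ℝⁿ. -/
open Real Finset

lemma L2 {ρ : ℝ} (hρ : 2 ≤ ρ) (s : ℝ) :
    HasDerivAt (fun s : ℝ => |s| ^ ρ) (ρ * (|s| ^ (ρ - 2) * s)) s := by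
  have h2 : (1:ℝ) ≤ ρ / 2 := by linarith
  have habs : ∀ t : ℝ, (t ^ 2 : ℝ) ^ (ρ/2) = |t| ^ ρ := by
    intro t
    rw [← sq_abs, ← Real.rpow_natCast |t| 2, ← Real.rpow_mul (abs_nonneg t)]
    norm_num [mul_div_cancel₀]
  have hsq : HasDerivAt (fun t : ℝ => t ^ 2) (2 * s) s := by
    simpa using (hasDerivAt_pow 2 s)
  have key := hsq.rpow_const (p := ρ/2) (Or.inr h2)
  rw [funext habs] at key
  convert key using 1
  have h3 : ((s:ℝ)^2) ^ (ρ/2 - 1) = |s| ^ (ρ - 2) := by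
    rw [← sq_abs, ← Real.rpow_natCast |s| 2, ← Real.rpow_mul (abs_nonneg s)]
    ring_nf
  rw [h3]; ring

lemma L1 {c : ℝ} (hc : 0 ≤ c) (s : ℝ) :
    HasDerivAt (fun s : ℝ => |s| ^ c * s) ((c + 1) * |s| ^ c) s := by
  rcases eq_or_lt_of_le hc with h0 | hc'
  · have hfun : (fun s : ℝ => |s| ^ c * s) = fun s : ℝ => s := by
      funext t; rw [← h0, Real.rpow_zero, one_mul]
    rw [hfun, ← h0]
    simpa using hasDerivAt_id' s
  rcases eq_or_ne s 0 with rfl | hs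
  · -- s = 0, c > 0
    have hcont : Filter.Tendsto (fun t : ℝ => |t| ^ c) (nhds 0) (nhds 0) := by
      have h2 : ContinuousAt (fun t : ℝ => |t| ^ c) 0 :=
        continuous_abs.continuousAt.rpow_const (Or.inr hc'.le)
      have h3 := h2.tendsto
      rw [show |(0:ℝ)| ^ c = 0 by rw [abs_zero, Real.zero_rpow hc'.ne']] at h3
      exact h3
    have key : HasDerivAt (fun s : ℝ => |s| ^ c * s) 0 0 := by
      rw [hasDerivAt_iff_isLittleO, Asymptotics.isLittleO_iff]
      intro ε hε
      filter_upwards [hcont (Metric.ball_mem_nhds 0 hε)] with t ht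
      simp only [Set.mem_preimage, Metric.mem_ball, Real.dist_eq, sub_zero] at ht
      have h1 : ‖|t| ^ c * t - |(0:ℝ)| ^ c * 0 - (t - 0) • (0:ℝ)‖ = |t| ^ c * |t| := by
        simp [abs_mul, abs_of_nonneg (Real.rpow_nonneg (abs_nonneg t) c)]
      rw [h1]
      have h3 : |t| ^ c ≤ ε := by
        have := le_abs_self (|t| ^ c); linarith [abs_lt.mp ht]
      have h4 : (0:ℝ) ≤ |t| ^ c := Real.rpow_nonneg (abs_nonneg t) c
      simp only [Real.norm_eq_abs, sub_zero]
      nlinarith [abs_nonneg t]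
    convert key using 1
    rw [abs_zero, Real.zero_rpow hc'.ne', mul_zero]
  · -- s ≠ 0
    have habs : HasDerivAt (fun t : ℝ => |t| ^ c) (c * |s| ^ (c-1) * (if s < 0 then -1 else 1)) s := by
      have hd : HasDerivAt (fun t : ℝ => |t|) (if s < 0 then -1 else 1) s := by
        rcases lt_or_gt_of_ne hs with h | h
        · simp only [if_pos h]
          have : HasDerivAt (fun t : ℝ => -t) (-1) s := (hasDerivAt_id s).neg
          apply this.congr_of_eventuallyEq
          filter_upwards [Iio_mem_nhds h] with t ht
          exact abs_of_neg ht
        · simp only [if_neg (not_lt.mpr h.le)]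
          apply (hasDerivAt_id s).congr_of_eventuallyEq
          filter_upwards [Ioi_mem_nhds h] with t ht
          exact abs_of_pos ht
      have := hd.rpow_const (p := c) (Or.inl (abs_ne_zero.mpr hs))
      convert this using 1; ring
    have hmul := habs.mul (hasDerivAt_id s)
    convert hmul using 1
    iterate 3 rfl
    simp only [id_eq, mul_one]
    rcases lt_or_gt_of_ne hs with h | h
    · rw [if_pos h, abs_of_neg h]
      have h5 : (-s) ^ (c-1) * (-s) = (-s) ^ c := by
        rw [← Real.rpow_add_one (by linarith : (-s : ℝ) ≠ 0) (c-1), sub_add_cancel]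
      nlinarith [h5]
    · rw [if_neg (not_lt.mpr h.le), abs_of_pos h]
      have h5 : s ^ (c-1) * s = s ^ c := by
        rw [← Real.rpow_add_one (by linarith : (s : ℝ) ≠ 0) (c-1), sub_add_cancel]
      nlinarith [h5]

noncomputable section

variable {n : ℕ} {ρ : ℝ}

def Sf (n : ℕ) (ρ : ℝ) (x : Fin n → ℝ) : ℝ := ∑ i, |x i| ^ ρ

def Gf (n : ℕ) (ρ : ℝ) (x : Fin n → ℝ) (i : Fin n) : ℝ :=
  2 * (Sf n ρ x) ^ (2/ρ - 1) * (|x i| ^ (ρ - 2) * x i)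

def Lf (n : ℕ) (ρ : ℝ) (x : Fin n → ℝ) : (Fin n → ℝ) →L[ℝ] ℝ :=
  ∑ i, Gf n ρ x i • ContinuousLinearMap.proj i

def qf (n : ℕ) (ρ : ℝ) (x : Fin n → ℝ) : ℝ := (Sf n ρ x) ^ (2/ρ)

lemma Sf_nonneg (x : Fin n → ℝ) : 0 ≤ Sf n ρ x :=
  Finset.sum_nonneg fun i _ => Real.rpow_nonneg (abs_nonneg _) _

lemma Sf_eq_zero_iff (hρ : 2 ≤ ρ) (x : Fin n → ℝ) : Sf n ρ x = 0 ↔ x = 0 := by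
  have hρ0 : ρ ≠ 0 := by positivity
  constructor
  · intro h
    funext i
    have := (Finset.sum_eq_zero_iff_of_nonneg
      (fun i _ => Real.rpow_nonneg (abs_nonneg (x i)) ρ)).mp h i (Finset.mem_univ i)
    have h2 := (Real.rpow_eq_zero (abs_nonneg (x i)) hρ0).mp this
    simpa using h2
  · rintro rfl
    simp [Sf, Real.zero_rpow hρ0]

lemma Lf_apply (x y : Fin n → ℝ) : Lf n ρ x y = ∑ i, Gf n ρ x i * y i := by
  simp [Lf, ContinuousLinearMap.sum_apply, ContinuousLinearMap.smul_apply,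
    ContinuousLinearMap.proj_apply, smul_eq_mul]

lemma Sf_hasFDerivAt (hρ : 2 ≤ ρ) (x : Fin n → ℝ) :
    HasFDerivAt (Sf n ρ)
      (∑ i, (ρ * (|x i| ^ (ρ - 2) * x i)) • (ContinuousLinearMap.proj i :
        (Fin n → ℝ) →L[ℝ] ℝ)) x := by
  have : ∀ i : Fin n, HasFDerivAt (fun x : Fin n → ℝ => |x i| ^ ρ)
      ((ρ * (|x i| ^ (ρ - 2) * x i)) • (ContinuousLinearMap.proj i :
        (Fin n → ℝ) →L[ℝ] ℝ)) x := by
    intro i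
    have hproj : HasFDerivAt (fun x : Fin n → ℝ => x i)
        (ContinuousLinearMap.proj i : (Fin n → ℝ) →L[ℝ] ℝ) x :=
      (ContinuousLinearMap.proj i : (Fin n → ℝ) →L[ℝ] ℝ).hasFDerivAt
    exact (L2 hρ (x i)).comp_hasFDerivAt x hproj
  exact HasFDerivAt.fun_sum fun i _ => this i

lemma Gf_zero_eq (i : Fin n) : Gf n ρ 0 i = 0 := by
  simp [Gf]

lemma Lf_zero_eq : Lf n ρ (0 : Fin n → ℝ) = 0 := by
  ext y
  rw [Lf_apply]
  simp [Gf_zero_eq]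

lemma qf_bound (hρ : 2 ≤ ρ) (x : Fin n → ℝ) :
    qf n ρ x ≤ ((n : ℝ) ^ (2/ρ)) * ‖x‖ ^ (2:ℝ) := by
  have hρ0 : (0:ℝ) < ρ := by linarith
  have hS : Sf n ρ x ≤ (n : ℝ) * ‖x‖ ^ ρ := by
    calc Sf n ρ x ≤ ∑ _i : Fin n, ‖x‖ ^ ρ := by
          apply Finset.sum_le_sum
          intro i _
          exact Real.rpow_le_rpow (abs_nonneg _) (norm_le_pi_norm x i) hρ0.le
      _ = (n : ℝ) * ‖x‖ ^ ρ := by simp [mul_comm]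
  have h1 : qf n ρ x ≤ ((n : ℝ) * ‖x‖ ^ ρ) ^ (2/ρ) :=
    Real.rpow_le_rpow (Sf_nonneg x) hS (by positivity)
  calc qf n ρ x ≤ ((n : ℝ) * ‖x‖ ^ ρ) ^ (2/ρ) := h1
    _ = ((n : ℝ)) ^ (2/ρ) * (‖x‖ ^ ρ) ^ (2/ρ) :=
        Real.mul_rpow (Nat.cast_nonneg n) (Real.rpow_nonneg (norm_nonneg x) ρ)
    _ = ((n : ℝ)) ^ (2/ρ) * ‖x‖ ^ (2:ℝ) := by
        rw [← Real.rpow_mul (norm_nonneg x)]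
        congr 1
        field_simp

lemma qf_zero (hρ : 2 ≤ ρ) : qf n ρ (0 : Fin n → ℝ) = 0 := by
  have hρ0 : ρ ≠ 0 := by positivity
  have h2ρ : 2/ρ ≠ 0 := by positivity
  simp [qf, Sf, Real.zero_rpow hρ0, Real.zero_rpow h2ρ]

lemma qf_hasFDerivAt (hρ : 2 ≤ ρ) (x : Fin n → ℝ) :
    HasFDerivAt (qf n ρ) (Lf n ρ x) x := by
  have hρ0 : (0:ℝ) < ρ := by linarith
  by_cases h : Sf n ρ x ≠ 0 ∨ 1 ≤ 2/ρ
  · have key := (Real.hasDerivAt_rpow_const (x := Sf n ρ x) (p := 2/ρ) h).comp_hasFDerivAt x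
      (Sf_hasFDerivAt hρ x)
    convert key using 1
    iterate 6 rfl
    ext y
    rw [Lf_apply]
    simp only [ContinuousLinearMap.coe_smul', Pi.smul_apply, ContinuousLinearMap.sum_apply,
      ContinuousLinearMap.smul_apply, ContinuousLinearMap.proj_apply, smul_eq_mul]
    rw [Finset.mul_sum]
    apply Finset.sum_congr rfl
    intro i _
    simp only [Gf]
    field_simp
  · -- Sf x = 0 and 2/ρ < 1, i.e. x = 0 and ρ > 2
    push_neg at h
    obtain ⟨hS0, _⟩ := h
    have hx0 : x = 0 := (Sf_eq_zero_iff hρ x).mp (not_not.mp (by simpa using hS0))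
    subst hx0
    rw [Lf_zero_eq]
    rw [hasFDerivAt_iff_isLittleO_nhds_zero]
    rw [Asymptotics.isLittleO_iff]
    intro ε hε
    set C : ℝ := ((n : ℝ) ^ (2/ρ)) + 1 with hC
    have hCpos : 0 < C := by positivity
    have hball : Metric.ball (0 : Fin n → ℝ) (ε / C) ∈ nhds (0 : Fin n → ℝ) :=
      Metric.ball_mem_nhds 0 (by positivity)
    filter_upwards [hball] with y hy
    simp only [Metric.mem_ball, dist_zero_right] at hy
    simp only [zero_add, ContinuousLinearMap.zero_apply, sub_zero, qf_zero hρ]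
    have h1 : qf n ρ y ≤ ((n : ℝ) ^ (2/ρ)) * ‖y‖ ^ (2:ℝ) := qf_bound hρ y
    have h2 : ‖y‖ ^ (2:ℝ) = ‖y‖ * ‖y‖ := by
      rw [show (2:ℝ) = ((2:ℕ):ℝ) by norm_num, Real.rpow_natCast]; ring
    have hqnn : 0 ≤ qf n ρ y := Real.rpow_nonneg (Sf_nonneg y) _
    rw [Real.norm_eq_abs, abs_of_nonneg hqnn]
    have hn2 : (0:ℝ) ≤ (n : ℝ) ^ (2/ρ) := by positivity
    calc qf n ρ y ≤ ((n : ℝ) ^ (2/ρ)) * (‖y‖ * ‖y‖) := by rw [← h2]; exact h1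
      _ ≤ C * ((ε / C) * ‖y‖) := by
          apply mul_le_mul (by simp [hC]) (by nlinarith [norm_nonneg y]) (by positivity) hCpos.le
      _ = ε * ‖y‖ := by field_simp

lemma Sf_continuous (hρ : 2 ≤ ρ) : Continuous (Sf n ρ) := by
  apply continuous_finset_sum
  intro i _
  have h1 : Continuous (fun s : ℝ => |s| ^ ρ) :=
    continuous_iff_continuousAt.mpr fun s => (L2 hρ s).continuousAt
  exact h1.comp (continuous_apply i)

lemma Af_continuous (hρ : 2 ≤ ρ) (i : Fin n) :
    Continuous (fun x : Fin n → ℝ => |x i| ^ (ρ - 2) * x i) := by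
  have h1 : Continuous (fun s : ℝ => |s| ^ (ρ-2) * s) :=
    continuous_iff_continuousAt.mpr fun s => (L1 (by linarith) s).continuousAt
  exact h1.comp (continuous_apply i)

lemma abs_rpow_succ (hρ : 2 ≤ ρ) (a : ℝ) : |a| ^ (ρ - 2) * |a| = |a| ^ (ρ - 1) := by
  rcases eq_or_ne a 0 with rfl | ha
  · rcases eq_or_lt_of_le hρ with h2 | h2
    · simp only [← h2, abs_zero]
      norm_num [Real.rpow_one]
    · rw [abs_zero, Real.zero_rpow (by linarith : ρ - 2 ≠ 0),
        Real.zero_rpow (by linarith : ρ - 1 ≠ 0), zero_mul]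
  · rw [← Real.rpow_add_one (abs_ne_zero.mpr ha) (ρ - 2)]
    congr 1
    ring

lemma Gf_bound (hρ : 2 ≤ ρ) (x : Fin n → ℝ) (i : Fin n) :
    |Gf n ρ x i| ≤ 2 * (Sf n ρ x) ^ (1/ρ) := by
  have hρ0 : (0:ℝ) < ρ := by linarith
  rcases eq_or_ne (Sf n ρ x) 0 with hS | hS
  · have hx0 : x = 0 := (Sf_eq_zero_iff hρ x).mp hS
    subst hx0
    rw [Gf_zero_eq, abs_zero]
    positivity
  · have hSpos : 0 < Sf n ρ x := lt_of_le_of_ne (Sf_nonneg x) (Ne.symm hS)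
    have h1 : |Gf n ρ x i| = 2 * (Sf n ρ x) ^ (2/ρ - 1) * (|x i| ^ (ρ - 2) * |x i|) := by
      simp only [Gf, abs_mul]
      rw [abs_of_nonneg (Real.rpow_nonneg (Sf_nonneg x) _),
        abs_of_nonneg (Real.rpow_nonneg (abs_nonneg _) _)]
      simp [abs_abs, mul_assoc]
    rw [h1, abs_rpow_succ hρ]
    have h2 : |x i| ^ (ρ - 1) ≤ (Sf n ρ x) ^ ((ρ-1)/ρ) := by
      have hterm : |x i| ^ ρ ≤ Sf n ρ x :=
        Finset.single_le_sum (f := fun j => |x j| ^ ρ)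
          (fun j _ => Real.rpow_nonneg (abs_nonneg _) _) (Finset.mem_univ i)
      have := Real.rpow_le_rpow (Real.rpow_nonneg (abs_nonneg _) _) hterm
        (div_nonneg (by linarith) (by linarith) : (0:ℝ) ≤ (ρ-1)/ρ)
      rwa [← Real.rpow_mul (abs_nonneg _), mul_div_cancel₀ (ρ-1) hρ0.ne'] at this
    calc 2 * (Sf n ρ x) ^ (2/ρ - 1) * |x i| ^ (ρ - 1)
        ≤ 2 * (Sf n ρ x) ^ (2/ρ - 1) * (Sf n ρ x) ^ ((ρ-1)/ρ) := by
          apply mul_le_mul_of_nonneg_left h2 (by positivity)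
      _ = 2 * (Sf n ρ x) ^ (1/ρ) := by
          rw [mul_assoc, ← Real.rpow_add hSpos]
          congr 2
          field_simp
          ring

lemma Gf_continuous (hρ : 2 ≤ ρ) (i : Fin n) : Continuous (fun x => Gf n ρ x i) := by
  rw [continuous_iff_continuousAt]
  intro x₀
  rcases eq_or_ne (Sf n ρ x₀) 0 with hS | hS
  · rcases eq_or_lt_of_le hρ with h2 | h2
    · -- ρ = 2
      have : (fun x : Fin n → ℝ => Gf n ρ x i) = fun x => 2 * (|x i| ^ (ρ - 2) * x i) := by
        funext x
        simp [Gf, ← h2, Real.rpow_zero]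
      rw [this]
      exact (continuous_const.mul (Af_continuous hρ i)).continuousAt
    · -- ρ > 2, x₀ = 0
      have hx0 : x₀ = 0 := (Sf_eq_zero_iff hρ x₀).mp hS
      subst hx0
      have htend : Filter.Tendsto (fun x => Gf n ρ x i) (nhds 0) (nhds 0) := by
        apply squeeze_zero_norm (fun x => Gf_bound hρ x i)
        have hco : ContinuousAt (fun s : ℝ => s ^ (1/ρ)) (Sf n ρ 0) := by
          apply Real.continuousAt_rpow_const
          right; positivity
        have hS0 : Sf n ρ (0 : Fin n → ℝ) = 0 := (Sf_eq_zero_iff hρ 0).mpr rfl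
        have key : Filter.Tendsto (fun x : Fin n → ℝ => (Sf n ρ x) ^ (1/ρ)) (nhds 0)
            (nhds 0) := by
          have hT := (hco.comp (Sf_continuous hρ).continuousAt).tendsto
          simpa [Function.comp_def, hS0,
            Real.zero_rpow (inv_ne_zero (by linarith : ρ ≠ 0))] using hT
        have h2' := key.const_mul (2:ℝ)
        simpa using h2'
      have hG0 : Gf n ρ (0 : Fin n → ℝ) i = 0 := Gf_zero_eq i
      rw [ContinuousAt]
      beta_reduce
      rw [hG0]
      exact htend
  · -- S x₀ ≠ 0
    apply ContinuousAt.mul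
    · apply ContinuousAt.mul continuousAt_const
      exact ((Sf_continuous hρ).continuousAt).rpow_const (Or.inl hS)
    · exact (Af_continuous hρ i).continuousAt

lemma Lf_continuous (hρ : 2 ≤ ρ) : Continuous (fun x : Fin n → ℝ => Lf n ρ x) := by
  apply continuous_finset_sum
  intro i _
  exact (Gf_continuous hρ i).smul continuous_const

lemma qf_contDiff (hρ : 2 ≤ ρ) : ContDiff ℝ 1 (qf n ρ) := by
  rw [contDiff_one_iff_fderiv]
  constructor
  · exact fun x => (qf_hasFDerivAt hρ x).differentiableAt
  · have : (fderiv ℝ (qf n ρ)) = fun x => Lf n ρ x := by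
      funext x
      exact (qf_hasFDerivAt hρ x).fderiv
    rw [this]
    exact Lf_continuous hρ

lemma U_le (hρ : 2 ≤ ρ) (u y : Fin n → ℝ) :
    ∑ i, |u i| ^ (ρ-2) * (y i)^2 ≤ (Sf n ρ u) ^ ((ρ-2)/ρ) * (Sf n ρ y) ^ (2/ρ) := by
  have hρ0 : (0:ℝ) < ρ := by linarith
  rcases eq_or_lt_of_le hρ with h2 | h2
  · -- ρ = 2
    apply le_of_eq
    have hLHS : ∑ i, |u i| ^ (ρ-2) * (y i)^2 = Sf n ρ y := by
      apply Finset.sum_congr rfl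
      intro i _
      rw [show ρ - 2 = 0 by rw [← h2]; ring, Real.rpow_zero, one_mul,
        ← sq_abs (y i), ← Real.rpow_natCast |y i| 2, ← h2]
      norm_num
    rw [hLHS, show (ρ-2)/ρ = 0 by rw [← h2]; norm_num, Real.rpow_zero, one_mul,
      show 2/ρ = 1 by rw [← h2]; norm_num, Real.rpow_one]
  · -- ρ > 2 : Hölder
    have hpq : Real.HolderConjugate (ρ/(ρ-2)) (ρ/2) := by
      rw [Real.holderConjugate_iff]; constructor
      · rw [lt_div_iff₀ (by linarith)]; linarith
      · field_simp; ring
    have hf : ∀ i ∈ Finset.univ, (0:ℝ) ≤ |u i| ^ (ρ-2) :=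
      fun i _ => Real.rpow_nonneg (abs_nonneg _) _
    have hg : ∀ i ∈ Finset.univ, (0:ℝ) ≤ (y i)^2 := fun i _ => sq_nonneg _
    have key := Real.inner_le_Lp_mul_Lq_of_nonneg Finset.univ hpq hf hg
    have e1 : ∑ i, (|u i| ^ (ρ-2)) ^ (ρ/(ρ-2)) = Sf n ρ u := by
      apply Finset.sum_congr rfl
      intro i _
      rw [← Real.rpow_mul (abs_nonneg _)]
      congr 1
      rw [mul_comm]
      exact div_mul_cancel₀ ρ (by linarith : ρ - 2 ≠ 0)
    have e2 : ∑ i, ((y i)^2 : ℝ) ^ (ρ/2) = Sf n ρ y := by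
      apply Finset.sum_congr rfl
      intro i _
      rw [← sq_abs (y i), ← Real.rpow_natCast |y i| 2, ← Real.rpow_mul (abs_nonneg _)]
      congr 1
      push_cast
      field_simp
    rw [e1, e2] at key
    calc ∑ i, |u i| ^ (ρ-2) * (y i)^2
        ≤ (Sf n ρ u) ^ (1/(ρ/(ρ-2))) * (Sf n ρ y) ^ (1/(ρ/2)) := key
      _ = (Sf n ρ u) ^ ((ρ-2)/ρ) * (Sf n ρ y) ^ (2/ρ) := by
          rw [one_div_div, one_div_div]

lemma main_ineq (hρ : 2 ≤ ρ) (x y : Fin n → ℝ) :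
    qf n ρ (x + y) ≤ qf n ρ x + Lf n ρ x y + (ρ - 1) * qf n ρ y := by
  have hρ0 : (0:ℝ) < ρ := by linarith
  rcases eq_or_ne y 0 with rfl | hy
  · simp [qf_zero hρ]
  -- setup
  set u : ℝ → (Fin n → ℝ) := fun t => x + t • y with hu_def
  set T : ℝ → ℝ := fun t => ∑ i, |u t i| ^ (ρ-2) * u t i * y i with hT_def
  set U : ℝ → ℝ := fun t => ∑ i, |u t i| ^ (ρ-2) * (y i)^2 with hU_def
  set g1 : ℝ → ℝ := fun t => ∑ i, Gf n ρ (u t) i * y i with hg1_def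
  set C : ℝ := (ρ - 1) * qf n ρ y with hC_def
  have hu : ∀ t, HasDerivAt u y t := by
    intro t
    simpa [hu_def] using ((hasDerivAt_id t).smul_const y).const_add x
  have hui : ∀ (t : ℝ) (i : Fin n), HasDerivAt (fun t => u t i) (y i) t := by
    intro t i
    have := (ContinuousLinearMap.proj (R := ℝ) (φ := fun _ : Fin n => ℝ)
      i).hasFDerivAt.comp_hasDerivAt t (hu t)
    exact this
  have hucont : Continuous u := by
    apply continuous_const.add
    exact (continuous_id.smul continuous_const)
  -- g1 as closed formula
  have hg1eq : g1 = fun t => 2 * (Sf n ρ (u t)) ^ (2/ρ - 1) * T t := by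
    funext t
    rw [hg1_def]
    simp only [Gf, hT_def]
    rw [Finset.mul_sum]
    apply Finset.sum_congr rfl
    intro i _
    ring
  -- derivative of g
  have hg : ∀ t, HasDerivAt (fun t => qf n ρ (u t)) (g1 t) t := by
    intro t
    have h := (qf_hasFDerivAt hρ (u t)).comp_hasDerivAt t (hu t)
    rwa [Lf_apply] at h
  -- derivative of S ∘ u
  have hSu : ∀ t, HasDerivAt (fun t => Sf n ρ (u t)) (ρ * T t) t := by
    intro t
    have h := (Sf_hasFDerivAt hρ (u t)).comp_hasDerivAt t (hu t)
    convert h using 1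
    iterate 3 rfl
    simp only [ContinuousLinearMap.sum_apply, ContinuousLinearMap.smul_apply,
      ContinuousLinearMap.proj_apply, smul_eq_mul, hT_def]
    rw [Finset.mul_sum]
    apply Finset.sum_congr rfl
    intro i _
    ring
  -- derivative of T
  have hT' : ∀ t, HasDerivAt T ((ρ-1) * U t) t := by
    intro t
    have hsum : HasDerivAt (fun t => ∑ i, |u t i| ^ (ρ-2) * u t i * y i)
        (∑ i : Fin n, ((ρ-2+1) * |u t i| ^ (ρ-2) * y i) * y i) t := by
      apply HasDerivAt.fun_sum
      intro i _
      have hcomp := (L1 (by linarith : (0:ℝ) ≤ ρ - 2) (u t i)).comp t (hui t i)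
      exact hcomp.mul_const (y i)
    convert hsum using 1
    rw [hU_def, Finset.mul_sum]
    apply Finset.sum_congr rfl
    intro i _
    ring
  -- derivative of g1 away from zeros
  have hg1' : ∀ t, Sf n ρ (u t) ≠ 0 →
      HasDerivAt g1 (2 * ((ρ * T t) * (2/ρ - 1) * (Sf n ρ (u t)) ^ (2/ρ - 1 - 1)) * T t
        + 2 * (Sf n ρ (u t)) ^ (2/ρ - 1) * ((ρ-1) * U t)) t := by
    intro t hne
    rw [hg1eq]
    have hA := (hSu t).rpow_const (p := 2/ρ - 1) (Or.inl hne)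
    have hB := hA.const_mul (2:ℝ)
    have hC' := hB.mul (hT' t)
    convert hC' using 1
    iterate 3 rfl
  -- bound on the second derivative
  have hbound : ∀ t, Sf n ρ (u t) ≠ 0 →
      2 * ((ρ * T t) * (2/ρ - 1) * (Sf n ρ (u t)) ^ (2/ρ - 1 - 1)) * T t
        + 2 * (Sf n ρ (u t)) ^ (2/ρ - 1) * ((ρ-1) * U t) ≤ 2 * C := by
    intro t hne
    have hSpos : 0 < Sf n ρ (u t) := lt_of_le_of_ne (Sf_nonneg _) (Ne.symm hne)
    have hterm1 : 2 * ((ρ * T t) * (2/ρ - 1) * (Sf n ρ (u t)) ^ (2/ρ - 1 - 1)) * T t ≤ 0 := by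
      have h1 : 2/ρ - 1 ≤ 0 := by
        have : 2/ρ ≤ 1 := by rw [div_le_one hρ0]; linarith
        linarith
      have h2 : (0:ℝ) ≤ (Sf n ρ (u t)) ^ (2/ρ - 1 - 1) := Real.rpow_nonneg (Sf_nonneg _) _
      have hc : (0:ℝ) ≤ 2 * ρ * (Sf n ρ (u t)) ^ (2/ρ - 1 - 1) * (T t)^2 := by positivity
      have heq : 2 * ((ρ * T t) * (2/ρ - 1) * (Sf n ρ (u t)) ^ (2/ρ - 1 - 1)) * T t
          = (2/ρ - 1) * (2 * ρ * (Sf n ρ (u t)) ^ (2/ρ - 1 - 1) * (T t)^2) := by ring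
      rw [heq]
      exact mul_nonpos_of_nonpos_of_nonneg h1 hc
    have hterm2 : 2 * (Sf n ρ (u t)) ^ (2/ρ - 1) * ((ρ-1) * U t) ≤ 2 * C := by
      have hU_le := U_le hρ (u t) y
      have hSe : (0:ℝ) ≤ (Sf n ρ (u t)) ^ (2/ρ - 1) := Real.rpow_nonneg (Sf_nonneg _) _
      have hkey : (Sf n ρ (u t)) ^ (2/ρ - 1) * U t ≤ qf n ρ y := by
        calc (Sf n ρ (u t)) ^ (2/ρ - 1) * U t
            ≤ (Sf n ρ (u t)) ^ (2/ρ - 1) *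
              ((Sf n ρ (u t)) ^ ((ρ-2)/ρ) * (Sf n ρ y) ^ (2/ρ)) :=
              mul_le_mul_of_nonneg_left hU_le hSe
          _ = qf n ρ y := by
              rw [← mul_assoc, ← Real.rpow_add hSpos,
                show 2/ρ - 1 + (ρ-2)/ρ = 0 by field_simp; ring, Real.rpow_zero, one_mul]
              rfl
      have hρ1 : (0:ℝ) ≤ ρ - 1 := by linarith
      rw [hC_def]
      nlinarith
    linarith
  -- t₀ : the (at most one) zero of u
  obtain ⟨t₀, ht₀⟩ : ∃ t₀ : ℝ, ∀ t, t ≠ t₀ → Sf n ρ (u t) ≠ 0 := by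
    by_cases h : ∃ t, u t = 0
    · obtain ⟨s, hs⟩ := h
      refine ⟨s, fun t ht hS => ?_⟩
      have h0 : u t = 0 := (Sf_eq_zero_iff hρ _).mp hS
      have : (t - s) • y = 0 := by
        have := sub_eq_zero.mpr (h0.trans hs.symm)
        rw [hu_def] at this
        simp only [add_sub_add_left_eq_sub, ← sub_smul] at this
        exact this
      rcases smul_eq_zero.mp this with h' | h'
      · exact ht (by linarith [sub_eq_zero.mp (by exact_mod_cast h')])
      · exact hy h'
    · push_neg at h
      exact ⟨0, fun t _ hS => h t ((Sf_eq_zero_iff hρ _).mp hS)⟩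
  -- h' is antitone
  set h' : ℝ → ℝ := fun t => g1 t - 2 * C * t with hh'_def
  have hh'cont : Continuous h' := by
    apply Continuous.sub
    · rw [hg1_def]
      apply continuous_finset_sum
      intro i _
      exact ((Gf_continuous hρ i).comp hucont).mul continuous_const
    · exact (continuous_const.mul continuous_id)
  have hh'deriv : ∀ t, t ≠ t₀ → HasDerivAt h'
      (2 * ((ρ * T t) * (2/ρ - 1) * (Sf n ρ (u t)) ^ (2/ρ - 1 - 1)) * T t
        + 2 * (Sf n ρ (u t)) ^ (2/ρ - 1) * ((ρ-1) * U t) - 2 * C) t := by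
    intro t ht
    have hlin : HasDerivAt (fun t : ℝ => 2 * C * t) (2 * C) t := by
      simpa using (hasDerivAt_id t).const_mul (2 * C)
    exact (hg1' t (ht₀ t ht)).sub hlin
  have hantiIic : AntitoneOn h' (Set.Iic t₀) := by
    apply antitoneOn_of_deriv_nonpos (convex_Iic t₀) hh'cont.continuousOn
    · rw [interior_Iic]
      exact fun s hs => ((hh'deriv s (ne_of_lt hs)).differentiableAt).differentiableWithinAt
    · rw [interior_Iic]
      intro s hs
      rw [(hh'deriv s (ne_of_lt hs)).deriv]
      have := hbound s (ht₀ s (ne_of_lt hs))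
      linarith
  have hantiIci : AntitoneOn h' (Set.Ici t₀) := by
    apply antitoneOn_of_deriv_nonpos (convex_Ici t₀) hh'cont.continuousOn
    · rw [interior_Ici]
      exact fun s hs => ((hh'deriv s (ne_of_gt hs)).differentiableAt).differentiableWithinAt
    · rw [interior_Ici]
      intro s hs
      rw [(hh'deriv s (ne_of_gt hs)).deriv]
      have := hbound s (ht₀ s (ne_of_gt hs))
      linarith
  have hanti : Antitone h' := by
    intro a b hab
    rcases le_total b t₀ with hb | hb
    · exact hantiIic (Set.mem_Iic.mpr (hab.trans hb)) (Set.mem_Iic.mpr hb) hab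
    rcases le_total a t₀ with ha | ha
    · calc h' b ≤ h' t₀ := hantiIci (Set.mem_Ici.mpr le_rfl) (Set.mem_Ici.mpr hb) hb
        _ ≤ h' a := hantiIic (Set.mem_Iic.mpr ha) (Set.mem_Iic.mpr le_rfl) ha
    · exact hantiIci (Set.mem_Ici.mpr ha) (Set.mem_Ici.mpr (ha.trans hab)) hab
  -- MVT
  set h : ℝ → ℝ := fun t => qf n ρ (u t) - C * t^2 with hh_def
  have hh : ∀ t, HasDerivAt h (h' t) t := by
    intro t
    have hpow : HasDerivAt (fun t : ℝ => C * t^2) (2 * C * t) t := by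
      have := (hasDerivAt_pow 2 t).const_mul C
      convert this using 1
      iterate 2 rfl
      push_cast
      ring
    exact (hg t).sub hpow
  obtain ⟨c, hc, hceq⟩ := exists_hasDerivAt_eq_slope h h' (by norm_num : (0:ℝ) < 1)
    (fun t _ => (hh t).continuousAt.continuousWithinAt) (fun t _ => hh t)
  have hmono : h 1 - h 0 ≤ h' 0 := by
    have h1 : h' c ≤ h' 0 := hanti (le_of_lt hc.1)
    rw [hceq] at *
    simpa using h1
  -- unfold
  have hu1 : u 1 = x + y := by rw [hu_def]; simp
  have hu0 : u 0 = x := by rw [hu_def]; simp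
  have e1 : h 1 = qf n ρ (x + y) - C := by rw [hh_def]; simp [hu1]
  have e0 : h 0 = qf n ρ x := by rw [hh_def]; simp [hu0]
  have e2 : h' 0 = Lf n ρ x y := by
    rw [hh'_def]
    simp only [mul_zero, sub_zero]
    rw [hg1_def]
    simp only [hu0]
    rw [Lf_apply]
  rw [e1, e0, e2] at hmono
  rw [hC_def] at hmono
  linarith

end

theorem lp_norm_sq_smooth (n : ℕ) (ρ : ℝ) (hρ : 2 ≤ ρ)
    (p : (Fin n → ℝ) → ℝ)
    (hp : p = fun x => ((∑ i, |x i| ^ ρ) ^ (1 / ρ)) ^ 2) :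
    ContDiff ℝ 1 p ∧
      ∀ x y : Fin n → ℝ, p (x + y) ≤ p x + fderiv ℝ p x y + (ρ - 1) * p y := by
  have hρ0 : (0:ℝ) < ρ := by linarith
  have hpq : p = qf n ρ := by
    rw [hp]
    funext x
    rw [qf, Sf, ← Real.rpow_natCast ((∑ i, |x i| ^ ρ) ^ (1/ρ)) 2,
      ← Real.rpow_mul (Finset.sum_nonneg fun i _ => Real.rpow_nonneg (abs_nonneg _) _)]
    congr 1
    push_cast
    field_simp
  subst hpq
  refine ⟨qf_contDiff hρ, fun x y => ?_⟩
  have hfd : fderiv ℝ (qf n ρ) x = Lf n ρ x := (qf_hasFDerivAt hρ x).fderiv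
  rw [hfd]
  exact main_ineq hρ x y
end

section
/- For ρ > 2, x ∈ ℝⁿ with ‖x‖_ρ = 1, and any h ∈ ℝⁿ, the second directional derivative of p(x) = ‖x‖_ρ² satisfies D²p(x)[h,h] ≤ 2(ρ−1)·‖h‖_ρ². -/
open Real Filter

lemma lpaux_hasDerivAt_abs_rpow_zero {q : ℝ} (hq : 1 < q) :
    HasDerivAt (fun s : ℝ => |s| ^ q) 0 0 := by
  rw [hasDerivAt_iff_tendsto_slope]
  apply squeeze_zero_norm (a := fun s : ℝ => |s| ^ (q - 1))
  · intro s
    rcases eq_or_ne s 0 with rfl | hs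
    · simp only [slope_same, norm_zero]
      positivity
    · have hpos : 0 < |s| := abs_pos.2 hs
      have : slope (fun s : ℝ => |s| ^ q) 0 s = |s| ^ q / s := by
        simp [slope, Real.zero_rpow (by linarith : q ≠ 0), div_eq_inv_mul]
      rw [this, Real.norm_eq_abs, abs_div, abs_rpow_of_nonneg (abs_nonneg s), abs_abs,
        Real.rpow_sub hpos, Real.rpow_one]
  · have hc : ContinuousAt (fun s : ℝ => |s| ^ (q - 1)) 0 :=
      (Real.continuousAt_rpow_const _ _ (Or.inr (by linarith))).comp continuous_abs.continuousAt
    have h0 : |(0:ℝ)| ^ (q-1) = 0 := by simp [Real.zero_rpow (by linarith : q - 1 ≠ 0)]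
    have := hc.tendsto
    rw [h0] at this
    exact tendsto_nhdsWithin_of_tendsto_nhds this

lemma lpaux_hasDerivAt_abs_rpow {q : ℝ} (hq : 1 < q) (t : ℝ) :
    HasDerivAt (fun s : ℝ => |s| ^ q) (q * (t * |t| ^ (q - 2))) t := by
  rcases lt_trichotomy t 0 with ht | rfl | ht
  · have h1 : HasDerivAt (fun s : ℝ => -s) (-1) t := (hasDerivAt_id t).neg
    have h2 : HasDerivAt (fun u : ℝ => u ^ q) (q * (-t) ^ (q-1)) (-t) :=
      Real.hasDerivAt_rpow_const (Or.inl (by linarith))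
    have hd := h2.comp t h1
    have heq : (fun s : ℝ => |s| ^ q) =ᶠ[nhds t] fun s => (-s) ^ q := by
      filter_upwards [Iio_mem_nhds ht] with s hs
      rw [abs_of_neg hs]
    have hthis := hd.congr_of_eventuallyEq heq
    refine hthis.congr_deriv ?_
    have hval : (-t) ^ (q-2) * (-t) = (-t) ^ (q-1) := by
      rw [← Real.rpow_add_one (by linarith : -t ≠ 0)]
      congr 1; ring
    rw [abs_of_neg ht, ← hval]
    ring
  · convert lpaux_hasDerivAt_abs_rpow_zero hq using 1
    ring
  · have h2 : HasDerivAt (fun u : ℝ => u ^ q) (q * t ^ (q-1)) t :=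
      Real.hasDerivAt_rpow_const (Or.inl (by linarith))
    have heq : (fun s : ℝ => |s| ^ q) =ᶠ[nhds t] fun s => s ^ q := by
      filter_upwards [Ioi_mem_nhds ht] with s hs
      rw [abs_of_pos hs]
    have hthis := h2.congr_of_eventuallyEq heq
    refine hthis.congr_deriv ?_
    have hval : t ^ (q-2) * t = t ^ (q-1) := by
      rw [← Real.rpow_add_one (by linarith : t ≠ 0)]
      congr 1; ring
    rw [abs_of_pos ht, ← hval]; ring

lemma lpaux_hasDerivAt_self_mul_abs_rpow {q : ℝ} (hq : 0 < q) (t : ℝ) :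
    HasDerivAt (fun s : ℝ => s * |s| ^ q) ((q + 1) * |t| ^ q) t := by
  rcases lt_trichotomy t 0 with ht | rfl | ht
  · have h1 : HasDerivAt (fun s : ℝ => -s) (-1) t := (hasDerivAt_id t).neg
    have h2 : HasDerivAt (fun u : ℝ => u ^ q) (q * (-t) ^ (q-1)) (-t) :=
      Real.hasDerivAt_rpow_const (Or.inl (by linarith))
    have hd := (hasDerivAt_id t).mul (h2.comp t h1)
    have heq : (fun s : ℝ => s * |s| ^ q) =ᶠ[nhds t] fun s => s * (-s) ^ q := by
      filter_upwards [Iio_mem_nhds ht] with s hs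
      rw [abs_of_neg hs]
    have hthis := hd.congr_of_eventuallyEq heq
    refine hthis.congr_deriv ?_
    simp only [Function.comp_def, id_eq]
    have hval : (-t) ^ (q-1) * (-t) = (-t) ^ q := by
      rw [← Real.rpow_add_one (by linarith : -t ≠ 0)]
      congr 1; ring
    rw [abs_of_neg ht, ← hval]
    ring
  · rw [hasDerivAt_iff_tendsto_slope]
    have h0 : |(0:ℝ)| ^ q = 0 := by simp [Real.zero_rpow hq.ne']
    rw [h0, mul_zero]
    apply squeeze_zero_norm (a := fun s : ℝ => |s| ^ q)
    · intro s
      rcases eq_or_ne s 0 with rfl | hs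
      · simp only [slope_same, norm_zero]; positivity
      · have : slope (fun s : ℝ => s * |s| ^ q) 0 s = |s| ^ q := by
          simp only [slope, vsub_eq_sub, smul_eq_mul, inv_mul_eq_div, zero_mul, sub_zero]
          rw [mul_div_cancel_left₀ _ hs]
        rw [this, Real.norm_eq_abs, abs_rpow_of_nonneg (abs_nonneg s), abs_abs]
    · have hc : ContinuousAt (fun s : ℝ => |s| ^ q) 0 :=
        (Real.continuousAt_rpow_const _ _ (Or.inr hq.le)).comp continuous_abs.continuousAt
      have := hc.tendsto
      rw [h0] at this
      exact tendsto_nhdsWithin_of_tendsto_nhds this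
  · have h2 : HasDerivAt (fun u : ℝ => u ^ q) (q * t ^ (q-1)) t :=
      Real.hasDerivAt_rpow_const (Or.inl (by linarith))
    have hd := (hasDerivAt_id t).mul h2
    have heq : (fun s : ℝ => s * |s| ^ q) =ᶠ[nhds t] fun s => s * s ^ q := by
      filter_upwards [Ioi_mem_nhds ht] with s hs
      rw [abs_of_pos hs]
    have hthis := hd.congr_of_eventuallyEq heq
    refine hthis.congr_deriv ?_
    simp only [id_eq]
    have hval : t ^ (q-1) * t = t ^ q := by
      rw [← Real.rpow_add_one (by linarith : t ≠ 0)]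
      congr 1; ring
    rw [abs_of_pos ht, ← hval]; ring

set_option maxHeartbeats 1000000 in
theorem lp_norm_sq_second_deriv_bound (n : ℕ) (ρ : ℝ) (hρ : 2 < ρ)
    (p : (Fin n → ℝ) → ℝ)
    (hp : p = fun x => ((∑ i, |x i| ^ ρ) ^ (1 / ρ)) ^ 2)
    (x : Fin n → ℝ) (hx : (∑ i, |x i| ^ ρ) ^ (1 / ρ) = 1)
    (h : Fin n → ℝ) :
    fderiv ℝ (fderiv ℝ p) x h h ≤ 2 * (ρ - 1) * ((∑ i, |h i| ^ ρ) ^ (1 / ρ)) ^ 2 := by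
  have hρ0 : (0:ℝ) < ρ := by linarith
  have hρ1 : (1:ℝ) < ρ := by linarith
  set S : (Fin n → ℝ) → ℝ := fun y => ∑ i, |y i| ^ ρ with hSdef
  have hSnonneg : ∀ y, 0 ≤ S y :=
    fun y => Finset.sum_nonneg fun i _ => Real.rpow_nonneg (abs_nonneg _) _
  have hS1 : S x = 1 := by
    have h1 : ((S x) ^ (1/ρ)) ^ ρ = 1 ^ ρ := by rw [hx]
    rwa [← Real.rpow_mul (hSnonneg x), one_div, inv_mul_cancel₀ hρ0.ne', Real.rpow_one,
      Real.one_rpow] at h1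
  set Pr : Fin n → ((Fin n → ℝ) →L[ℝ] ℝ) := fun i => ContinuousLinearMap.proj i with hPrdef
  have hproj : ∀ (i : Fin n) (y : Fin n → ℝ), HasFDerivAt (fun z : Fin n → ℝ => z i)
      (Pr i) y := fun i y => by
    have hP := ContinuousLinearMap.hasFDerivAt (f := Pr i) (x := y)
    exact hP
  set D : (Fin n → ℝ) → ((Fin n → ℝ) →L[ℝ] ℝ) := fun y =>
    ∑ i, (ρ * (y i * |y i| ^ (ρ - 2))) • (Pr i)
    with hDdef
  have hSd : ∀ y, HasFDerivAt S (D y) y := by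
    intro y
    exact HasFDerivAt.fun_sum fun i _ => by
      have := (lpaux_hasDerivAt_abs_rpow hρ1 (y i)).comp_hasFDerivAt y (hproj i y); exact this
  have hps : p = fun y => (S y) ^ (2 / ρ) := by
    funext y
    rw [hp]
    show ((S y) ^ (1/ρ)) ^ (2:ℕ) = S y ^ (2/ρ)
    rw [← Real.rpow_natCast ((S y) ^ (1/ρ)) 2, ← Real.rpow_mul (hSnonneg y)]
    congr 1
    ring
  -- first derivative of p on the set where S > 0
  have hpd : ∀ y, 0 < S y →
      HasFDerivAt p ((2 / ρ * (S y) ^ (2 / ρ - 1)) • D y) y := by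
    intro y hy
    rw [hps]
    exact (Real.hasDerivAt_rpow_const (p := 2/ρ) (Or.inl hy.ne')).comp_hasFDerivAt y (hSd y)
  -- derivative of D at x
  set B : (Fin n → ℝ) →L[ℝ] ((Fin n → ℝ) →L[ℝ] ℝ) :=
    ∑ i, ((ρ * ((ρ - 2 + 1) * |x i| ^ (ρ - 2))) •
      (Pr i)).smulRight
      (Pr i) with hBdef
  have hDd : HasFDerivAt D B x := by
    apply HasFDerivAt.fun_sum
    intro i _
    have := (((lpaux_hasDerivAt_self_mul_abs_rpow (by linarith : (0:ℝ) < ρ - 2)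
      (x i)).const_mul ρ).comp_hasFDerivAt x (hproj i x)).smul_const (Pr i); exact this
  -- derivative of the scalar factor at x
  have hcd : HasFDerivAt (fun y => 2 / ρ * (S y) ^ (2 / ρ - 1))
      ((2/ρ) • ((2 / ρ - 1) * (S x) ^ (2 / ρ - 1 - 1)) • D x) x :=
    ((Real.hasDerivAt_rpow_const (p := 2/ρ - 1)
      (Or.inl (by rw [hS1]; norm_num))).comp_hasFDerivAt x (hSd x)).const_mul (2/ρ)
  -- second derivative
  have hFd : HasFDerivAt (fun y => (2 / ρ * (S y) ^ (2 / ρ - 1)) • D y)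
      ((2 / ρ * (S x) ^ (2 / ρ - 1)) • B +
        ((2/ρ) • ((2 / ρ - 1) * (S x) ^ (2 / ρ - 1 - 1)) • D x).smulRight (D x)) x :=
    hcd.smul hDd
  have hev : fderiv ℝ p =ᶠ[nhds x] fun y => (2 / ρ * (S y) ^ (2 / ρ - 1)) • D y := by
    have hcont : ContinuousAt S x := (hSd x).differentiableAt.continuousAt
    have hpos : ∀ᶠ y in nhds x, 0 < S y :=
      hcont (Ioi_mem_nhds (by rw [hS1]; norm_num))
    filter_upwards [hpos] with y hy
    exact (hpd y hy).fderiv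
  have hkey : fderiv ℝ (fderiv ℝ p) x =
      (2 / ρ * (S x) ^ (2 / ρ - 1)) • B +
        ((2/ρ) • ((2 / ρ - 1) * (S x) ^ (2 / ρ - 1 - 1)) • D x).smulRight (D x) := by
    rw [hev.fderiv_eq, hFd.fderiv]
  rw [hkey]
  simp only [ContinuousLinearMap.add_apply, ContinuousLinearMap.coe_smul', Pi.smul_apply,
    ContinuousLinearMap.smulRight_apply, ContinuousLinearMap.coe_sum', Finset.sum_apply,
    ContinuousLinearMap.smul_apply, hPrdef, ContinuousLinearMap.proj_apply, smul_eq_mul, hS1,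
    Real.one_rpow, hBdef, hDdef]
  set T : ℝ := ∑ i, x i * |x i| ^ (ρ - 2) * h i with hT
  set K : ℝ := ∑ i, |x i| ^ (ρ - 2) * (h i * h i) with hK
  set R : ℝ := ((∑ i, |h i| ^ ρ) ^ (1 / ρ)) ^ 2 with hR
  have hsum1 : ∑ i, ρ * ((ρ - 2 + 1) * |x i| ^ (ρ - 2)) * h i * h i = ρ * (ρ - 1) * K := by
    rw [hK, Finset.mul_sum]
    exact Finset.sum_congr rfl fun i _ => by ring
  have hsum2 : ∑ i, ρ * (x i * |x i| ^ (ρ - 2)) * h i = ρ * T := by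
    rw [hT, Finset.mul_sum]
    exact Finset.sum_congr rfl fun i _ => by ring
  rw [hsum1, hsum2]
  -- Hölder: K ≤ R
  have hpq : Real.HolderConjugate (ρ / (ρ - 2)) (ρ / 2) := by
    rw [Real.holderConjugate_iff]
    constructor
    · rw [lt_div_iff₀ (by linarith)]
      linarith
    · field_simp
      ring
  have hKR : K ≤ R := by
    have hHold := Real.inner_le_Lp_mul_Lq_of_nonneg Finset.univ hpq
      (f := fun i => |x i| ^ (ρ - 2)) (g := fun i => h i * h i)
      (fun i _ => Real.rpow_nonneg (abs_nonneg _) _)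
      (fun i _ => mul_self_nonneg _)
    have e1 : ∀ i : Fin n, (|x i| ^ (ρ - 2)) ^ (ρ / (ρ - 2)) = |x i| ^ ρ := by
      intro i
      rw [← Real.rpow_mul (abs_nonneg _)]
      congr 1
      rw [mul_comm, div_mul_cancel₀ _ (by linarith : ρ - 2 ≠ 0)]
    have e2 : ∀ i : Fin n, (h i * h i) ^ (ρ / 2) = |h i| ^ ρ := by
      intro i
      have : h i * h i = |h i| ^ (2:ℝ) := by
        rw [show (2:ℝ) = ((2:ℕ):ℝ) by norm_num, Real.rpow_natCast]
        rw [sq_abs, sq]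
      rw [this, ← Real.rpow_mul (abs_nonneg _)]
      congr 1
      rw [mul_comm, div_mul_cancel₀ _ (two_ne_zero)]
    simp only [e1, e2] at hHold
    have hfac1 : (∑ i, |x i| ^ ρ) ^ (1 / (ρ / (ρ - 2))) = 1 := by
      rw [show (∑ i, |x i| ^ ρ) = S x from rfl, hS1, Real.one_rpow]
    have hfac2 : (∑ i, |h i| ^ ρ) ^ (1 / (ρ / 2)) = R := by
      rw [hR, ← Real.rpow_natCast ((∑ i, |h i| ^ ρ) ^ (1/ρ)) 2,
        ← Real.rpow_mul (Finset.sum_nonneg fun i _ => Real.rpow_nonneg (abs_nonneg _) _)]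
      congr 1
      field_simp
      norm_num
    rw [hfac1, hfac2, one_mul] at hHold
    exact hHold
  have hRnn : 0 ≤ R := sq_nonneg _
  have hTsq : 0 ≤ T * T := mul_self_nonneg T
  have hLHS : 2 / ρ * 1 * (ρ * (ρ - 1) * K) + 2 / ρ * ((2 / ρ - 1) * 1 * (ρ * T)) * (ρ * T)
      = 2 * (ρ - 1) * K + (4 - 2 * ρ) * (T * T) := by
    field_simp
    ring
  rw [hLHS]
  nlinarith [hKR, hTsq]
end

section
/- Let (E, ‖·‖) be finite-dimensional, f(x) = ‖x‖²/2 and f_*(ξ) = ‖ξ‖_*²/2 its Legendre transform. If for all ξ, η ∈ E* and x ∈ ∂f_*(ξ) one has f_*(ξ+η) ≥ f_*(ξ) + ⟨η, x⟩ + (1/(2κ))‖η‖_*², then f is continuously differentiable and f(x+y) ≤ f(x) + ⟨f'(x), y⟩ + (κ/2)‖y‖² for all x, y ∈ E. -/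
set_option maxHeartbeats 1000000 in
theorem smooth_of_dual_strong_convexity {E : Type*} [NormedAddCommGroup E] [NormedSpace ℝ E]
    [FiniteDimensional ℝ E] (κ : ℝ) (hκ : 0 < κ)
    (f : E → ℝ) (hf : f = fun x => ‖x‖ ^ 2 / 2)
    (fs : (E →L[ℝ] ℝ) → ℝ) (hfs : fs = fun ξ => ‖ξ‖ ^ 2 / 2)
    (hsub : ∀ (ξ η : E →L[ℝ] ℝ) (x : E),
      (∀ ζ : E →L[ℝ] ℝ, fs ξ + (ζ - ξ) x ≤ fs ζ) →
        fs ξ + η x + 1 / (2 * κ) * ‖η‖ ^ 2 ≤ fs (ξ + η)) :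
    ContDiff ℝ 1 f ∧
      ∀ x y : E, f (x + y) ≤ f x + fderiv ℝ f x y + κ / 2 * ‖y‖ ^ 2 := by
  subst hf hfs
  have hκ0 : κ ≠ 0 := hκ.ne'
  simp only at hsub
  -- duality map
  have exD : ∀ x : E, ∃ ξ : E →L[ℝ] ℝ, ξ x = ‖x‖ ^ 2 ∧ ‖ξ‖ = ‖x‖ := by
    intro x
    rcases eq_or_ne x 0 with rfl | hx
    · exact ⟨0, by simp, by simp⟩
    · obtain ⟨G, hG1, hGx⟩ := exists_dual_vector ℝ x (norm_ne_zero_iff.mpr hx)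
      refine ⟨‖x‖ • G, ?_, ?_⟩
      · rw [ContinuousLinearMap.smul_apply, hGx]
        simp [RCLike.ofReal_real_eq_id]
        ring
      · have hns := norm_smul ‖x‖ G
        rw [hns, hG1, Real.norm_eq_abs, abs_of_nonneg (norm_nonneg x), mul_one]
  choose g hg1 hg2 using exD
  -- g x is a subgradient of fs at g x
  have subgrad : ∀ x : E, ∀ ζ : E →L[ℝ] ℝ,
      ‖g x‖ ^ 2 / 2 + (ζ - g x) x ≤ ‖ζ‖ ^ 2 / 2 := by
    intro x ζ
    have h1 : ζ x ≤ ‖ζ‖ * ‖x‖ := le_trans (le_abs_self _) (ζ.le_opNorm x)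
    simp only [ContinuousLinearMap.sub_apply, hg1, hg2]
    nlinarith [sq_nonneg (‖ζ‖ - ‖x‖)]
  -- Lipschitz estimate for g
  have lip : ∀ x y : E, ‖g y - g x‖ ≤ κ * ‖y - x‖ := by
    intro x y
    have h1 := hsub (g x) (g y - g x) x (subgrad x)
    have h2 := hsub (g y) (g x - g y) y (subgrad y)
    have e1 : g x + (g y - g x) = g y := by abel
    have e2 : g y + (g x - g y) = g x := by abel
    rw [e1] at h1
    rw [e2] at h2
    rw [norm_sub_rev (g x) (g y)] at h2
    have hb : -(‖g y - g x‖ * ‖y - x‖) ≤ (g x - g y) (y - x) := by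
      have h3 : |(g x - g y) (y - x)| ≤ ‖g x - g y‖ * ‖y - x‖ :=
        (g x - g y).le_opNorm (y - x)
      rw [norm_sub_rev (g x) (g y)] at h3
      linarith [neg_abs_le ((g x - g y) (y - x))]
    have e3 : (g y - g x) x + (g x - g y) y = (g x - g y) (y - x) := by
      simp only [ContinuousLinearMap.sub_apply, map_sub]; ring
    have hsum : 1 / (2 * κ) * ‖g y - g x‖ ^ 2 + 1 / (2 * κ) * ‖g y - g x‖ ^ 2
        ≤ ‖g y - g x‖ * ‖y - x‖ := by linarith
    have h2' : ‖g y - g x‖ ^ 2 ≤ κ * (‖g y - g x‖ * ‖y - x‖) := by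
      have h3 := mul_le_mul_of_nonneg_left hsum hκ.le
      calc ‖g y - g x‖ ^ 2
          = κ * (1 / (2 * κ) * ‖g y - g x‖ ^ 2 + 1 / (2 * κ) * ‖g y - g x‖ ^ 2) := by
            field_simp; ring
        _ ≤ κ * (‖g y - g x‖ * ‖y - x‖) := h3
    rcases (norm_nonneg (g y - g x)).eq_or_lt with hd | hd
    · rw [← hd]; positivity
    · nlinarith [h2', hd]
  -- key two-sided estimate
  have key : ∀ x h : E, |‖x + h‖ ^ 2 / 2 - ‖x‖ ^ 2 / 2 - g x h| ≤ κ * ‖h‖ ^ 2 := by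
    intro x h
    have hl : g x (x + h) ≤ ‖x‖ * ‖x + h‖ := by
      have h0 := le_trans (le_abs_self _) ((g x).le_opNorm (x + h))
      rwa [hg2] at h0
    have hu : g (x + h) x ≤ ‖x + h‖ * ‖x‖ := by
      have h0 := le_trans (le_abs_self _) ((g (x + h)).le_opNorm x)
      rwa [hg2] at h0
    have e1 : g x (x + h) = ‖x‖ ^ 2 + g x h := by rw [map_add, hg1]
    have e2 : g (x + h) x + g (x + h) h = ‖x + h‖ ^ 2 := by
      rw [← map_add, hg1]
    have hdd : g (x + h) h - g x h ≤ κ * ‖h‖ ^ 2 := by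
      have h1 : (g (x + h) - g x) h ≤ ‖g (x + h) - g x‖ * ‖h‖ :=
        le_trans (le_abs_self _) ((g (x + h) - g x).le_opNorm h)
      have h2 := lip x (x + h)
      simp only [add_sub_cancel_left] at h2
      rw [ContinuousLinearMap.sub_apply] at h1
      nlinarith [norm_nonneg h, norm_nonneg (g (x + h) - g x)]
    rw [abs_le]
    constructor
    · nlinarith [sq_nonneg (‖x‖ - ‖x + h‖), mul_nonneg hκ.le (sq_nonneg ‖h‖)]
    · nlinarith [sq_nonneg (‖x + h‖ - ‖x‖)]
  -- differentiability
  have hder : ∀ x : E, HasFDerivAt (fun x : E => ‖x‖ ^ 2 / 2) (g x) x := by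
    intro x
    rw [hasFDerivAt_iff_isLittleO_nhds_zero, Asymptotics.isLittleO_iff]
    intro c hc
    filter_upwards [Metric.ball_mem_nhds (0 : E) (show (0 : ℝ) < c / κ by positivity)]
      with h hh
    rw [Metric.mem_ball, dist_zero_right] at hh
    have hh' : ‖h‖ * κ < c := (lt_div_iff₀ hκ).mp hh
    have hn : ‖‖x + h‖ ^ 2 / 2 - ‖x‖ ^ 2 / 2 - g x h‖ ≤ κ * ‖h‖ ^ 2 := by
      rw [Real.norm_eq_abs]; exact key x h
    calc ‖(fun h : E => ‖x + h‖ ^ 2 / 2) h - (fun _ : E => ‖x‖ ^ 2 / 2) h - g x h‖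
        = ‖‖x + h‖ ^ 2 / 2 - ‖x‖ ^ 2 / 2 - g x h‖ := rfl
      _ ≤ κ * ‖h‖ ^ 2 := hn
      _ ≤ c * ‖h‖ := by nlinarith [norm_nonneg h]
  have hfd : (fderiv ℝ (fun x : E => ‖x‖ ^ 2 / 2)) = g :=
    funext fun x => (hder x).fderiv
  constructor
  · rw [contDiff_one_iff_fderiv]
    refine ⟨fun x => (hder x).differentiableAt, ?_⟩
    rw [hfd]
    have hlip : LipschitzWith κ.toNNReal g := by
      refine LipschitzWith.of_dist_le_mul fun a b => ?_
      rw [dist_eq_norm, dist_eq_norm, Real.coe_toNNReal _ hκ.le]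
      exact lip b a
    exact hlip.continuous
  · intro x y
    rw [hfd]
    have h1 := hsub (g x) (g (x + y) - g x) x (subgrad x)
    have e1 : g x + (g (x + y) - g x) = g (x + y) := by abel
    rw [e1] at h1
    have e2 : (g (x + y) - g x) x = g (x + y) x - ‖x‖ ^ 2 := by
      rw [ContinuousLinearMap.sub_apply, hg1]
    have e3 : g (x + y) x + g (x + y) y = ‖x + y‖ ^ 2 := by rw [← map_add, hg1]
    have e4 : g (x + y) y = g x y + (g (x + y) - g x) y := by
      rw [ContinuousLinearMap.sub_apply]; ring
    have hb : (g (x + y) - g x) y ≤ ‖g (x + y) - g x‖ * ‖y‖ :=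
      le_trans (le_abs_self _) ((g (x + y) - g x).le_opNorm y)
    have hq : ‖g (x + y) - g x‖ * ‖y‖ - 1 / (2 * κ) * ‖g (x + y) - g x‖ ^ 2
        ≤ κ / 2 * ‖y‖ ^ 2 := by
      have h0 : (0 : ℝ) ≤ (‖g (x + y) - g x‖ - κ * ‖y‖) ^ 2 / (2 * κ) :=
        div_nonneg (sq_nonneg _) (by positivity)
      have hexp : (‖g (x + y) - g x‖ - κ * ‖y‖) ^ 2 / (2 * κ)
          = 1 / (2 * κ) * ‖g (x + y) - g x‖ ^ 2 - ‖g (x + y) - g x‖ * ‖y‖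
            + κ / 2 * ‖y‖ ^ 2 := by
        field_simp; ring
      rw [hexp] at h0
      linarith
    simp only [hg2] at h1
    show ‖x + y‖ ^ 2 / 2 ≤ ‖x‖ ^ 2 / 2 + g x y + κ / 2 * ‖y‖ ^ 2
    linarith
end

section
/- Let (E, ‖·‖) be a κ-smooth finite-dimensional normed space, and let (ξ_i) be an E-valued martingale difference sequence satisfying ‖ξ_i‖ ≤ σ_i almost surely for deterministic σ_i > 0. Then for every N ≥ 1 and γ ≥ 0, Prob{ ‖Σ_{i=1}^N ξ_i‖ ≥ (√κ + γ)·sqrt(Σ_{i=1}^N σ_i²) } ≤ exp(−γ²/2). -/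
open MeasureTheory Filter

private lemma aux_sqrt_tangent {m d : ℝ} (hm : 0 < m) (hd : -m ≤ d) :
    Real.sqrt (m + d) ≤ Real.sqrt m + d / (2 * Real.sqrt m) := by
  set r := Real.sqrt m with hr
  have hrpos : 0 < r := Real.sqrt_pos.2 hm
  have hr2 : r ^ 2 = m := Real.sq_sqrt hm.le
  have hnn : 0 ≤ r + d / (2 * r) := by
    have : -m / (2 * r) ≤ d / (2 * r) := by exact div_le_div_of_nonneg_right hd (by positivity)
    have h2 : -m / (2 * r) = -(r / 2) := by
      rw [← hr2]; field_simp
    nlinarith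
  have hle : m + d ≤ (r + d / (2 * r)) ^ 2 := by
    have : (r + d / (2 * r)) ^ 2 = m + d + (d / (2 * r)) ^ 2 := by
      field_simp; nlinarith [hr2]
    nlinarith [sq_nonneg (d / (2 * r))]
  calc Real.sqrt (m + d) ≤ Real.sqrt ((r + d / (2 * r)) ^ 2) := Real.sqrt_le_sqrt hle
    _ = r + d / (2 * r) := Real.sqrt_sq hnn

private lemma aux_exp_convex {Y s t : ℝ} (hs : 0 < s) (hY : |Y| ≤ s) :
    Real.exp (t * Y) ≤ Real.cosh (t * s) + (Y / s) * Real.sinh (t * s) := by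
  obtain ⟨h1, h2⟩ := abs_le.1 hY
  have hs' : s ≠ 0 := hs.ne'
  have key := convexOn_exp.2 (Set.mem_univ (t * s)) (Set.mem_univ (-(t * s)))
    (show (0:ℝ) ≤ (s + Y) / (2 * s) from div_nonneg (by linarith) (by positivity))
    (show (0:ℝ) ≤ (s - Y) / (2 * s) from div_nonneg (by linarith) (by positivity))
    (show (s + Y) / (2 * s) + (s - Y) / (2 * s) = 1 by field_simp; ring)
  rw [smul_eq_mul, smul_eq_mul] at key
  have harg : (s + Y) / (2 * s) * (t * s) + (s - Y) / (2 * s) * (-(t * s)) = t * Y := by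
    field_simp; ring
  rw [harg] at key
  refine key.trans (le_of_eq ?_)
  rw [Real.cosh_eq, Real.sinh_eq]
  field_simp
  ring_nf
  field_simp
  ring

private lemma aux_fderiv_bound {E : Type*} [NormedAddCommGroup E] [NormedSpace ℝ E]
    {κ : ℝ} (hκ : 0 < κ)
    (hsm : ∀ x y : E, ‖x + y‖ ^ 2 ≤
      ‖x‖ ^ 2 + fderiv ℝ (fun z : E => ‖z‖ ^ 2) x y + κ * ‖y‖ ^ 2)
    (x y : E) : |fderiv ℝ (fun z : E => ‖z‖ ^ 2) x y| ≤ 2 * ‖x‖ * ‖y‖ := by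
  have key : ∀ w : E, -(2 * ‖x‖ * ‖w‖) ≤ fderiv ℝ (fun z : E => ‖z‖ ^ 2) x w := by
    intro w
    rcases eq_or_ne w 0 with rfl | hw
    · simp
    have hw' : 0 < ‖w‖ := norm_pos_iff.2 hw
    refine le_of_forall_pos_le_add ?_
    intro ε hε
    set t : ℝ := ε / (κ * ‖w‖ ^ 2) with ht
    have htpos : 0 < t := by positivity
    have h := hsm x (t • w)
    have hmap : fderiv ℝ (fun z : E => ‖z‖ ^ 2) x (t • w)
        = t * fderiv ℝ (fun z : E => ‖z‖ ^ 2) x w := by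
      rw [(fderiv ℝ (fun z : E => ‖z‖ ^ 2) x).map_smul, smul_eq_mul]
    have hns : ‖t • w‖ = t * ‖w‖ := by
      rw [norm_smul, Real.norm_of_nonneg htpos.le]
    have hlb : |‖x‖ - ‖t • w‖| ≤ ‖x + t • w‖ := by
      have := abs_norm_sub_norm_le x (-(t • w))
      simpa [sub_neg_eq_add] using this
    have hlb2 : (‖x‖ - t * ‖w‖) ^ 2 ≤ ‖x + t • w‖ ^ 2 := by
      rw [← hns, ← sq_abs (‖x‖ - ‖t • w‖)]
      exact pow_le_pow_left₀ (abs_nonneg _) hlb 2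
    rw [hmap, hns] at h
    have htk : κ * t ^ 2 * ‖w‖ ^ 2 = t * ε := by
      rw [ht]; field_simp
    -- from h and hlb2 : t * D ≥ -2 t ‖x‖‖w‖ - t ε  (using t²‖w‖² ≥ 0)
    have hD : 0 ≤ t * (fderiv ℝ (fun z : E => ‖z‖ ^ 2) x w + 2 * ‖x‖ * ‖w‖ + ε) := by
      nlinarith [sq_nonneg (t * ‖w‖)]
    have := (mul_nonneg_iff_of_pos_left htpos).mp hD
    linarith
  refine abs_le.2 ⟨key y, ?_⟩
  have h2 := key (-y)
  rw [(fderiv ℝ (fun z : E => ‖z‖ ^ 2) x).map_neg, norm_neg] at h2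
  linarith

private lemma aux_condexp_zero_comp {E : Type*} [NormedAddCommGroup E] [NormedSpace ℝ E]
    [CompleteSpace E]
    {Ω : Type*} {m m0 : MeasurableSpace Ω} (hm : m ≤ m0) {P : Measure Ω} [IsFiniteMeasure P]
    {ξ : Ω → E} (hξi : Integrable ξ P) (hcond : P[ξ|m] =ᵐ[P] 0)
    (φ : E →L[ℝ] ℝ) : P[fun ω => φ (ξ ω)|m] =ᵐ[P] 0 := by
  have hX : Integrable (fun ω => φ (ξ ω)) P := φ.integrable_comp hξi
  refine (ae_eq_condExp_of_forall_setIntegral_eq hm hX ?_ ?_ ?_).symm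
  · intro s _ _
    exact (integrable_zero _ _ _).integrableOn
  · intro s hs _
    have h2 : ∫ ω in s, ξ ω ∂P = 0 := by
      rw [← setIntegral_condExp hm hξi hs]
      refine integral_eq_zero_of_ae ?_
      exact ae_restrict_of_ae hcond
    have h1 : ∫ ω in s, φ (ξ ω) ∂P = φ (∫ ω in s, ξ ω ∂P) :=
      φ.integral_comp_comm hξi.integrableOn
    simp [h1, h2]
  · exact stronglyMeasurable_const.aestronglyMeasurable

private lemma aux_integral_mul_eq_zero {E : Type*} [NormedAddCommGroup E] [NormedSpace ℝ E]
    [FiniteDimensional ℝ E]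
    {Ω : Type*} {m m0 : MeasurableSpace Ω} (hm : m ≤ m0) {P : Measure Ω} [IsProbabilityMeasure P]
    {ξ : Ω → E} (hξi : Integrable ξ P) (hcond : P[ξ|m] =ᵐ[P] 0)
    {H : Ω → E →L[ℝ] ℝ} (hH : StronglyMeasurable[m] H) (C : ℝ)
    (hHb : ∀ᵐ ω ∂P, ‖H ω‖ ≤ C) :
    ∫ ω, H ω (ξ ω) ∂P = 0 := by
  classical
  haveI : CompleteSpace E := FiniteDimensional.complete ℝ E
  set b := Module.finBasis ℝ E with hb
  set n := Module.finrank ℝ E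
  let φ : Fin n → E →L[ℝ] ℝ := fun k => LinearMap.toContinuousLinearMap (b.coord k)
  have hdecomp : ∀ ω, H ω (ξ ω) = ∑ k, (H ω (b k)) * φ k (ξ ω) := by
    intro ω
    conv_lhs => rw [← b.sum_repr (ξ ω)]
    rw [map_sum]
    refine Finset.sum_congr rfl fun k _ => ?_
    rw [_root_.map_smul, smul_eq_mul, mul_comm]
    rfl
  have hterm : ∀ k : Fin n, ∫ ω, (H ω (b k)) * φ k (ξ ω) ∂P = 0 := by
    intro k
    have hXk : Integrable (fun ω => φ k (ξ ω)) P := (φ k).integrable_comp hξi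
    have hXc : P[fun ω => φ k (ξ ω)|m] =ᵐ[P] 0 := aux_condexp_zero_comp hm hξi hcond (φ k)
    have hHk : StronglyMeasurable[m] (fun ω => H ω (b k)) :=
      ((ContinuousLinearMap.apply ℝ ℝ (b k)).continuous).comp_stronglyMeasurable hH
    have hHkb : ∀ᵐ ω ∂P, ‖H ω (b k)‖ ≤ C * ‖b k‖ := by
      filter_upwards [hHb] with ω h
      calc ‖H ω (b k)‖ ≤ ‖H ω‖ * ‖b k‖ := (H ω).le_opNorm _
        _ ≤ C * ‖b k‖ := by gcongr
    have hmul : Integrable (fun ω => (H ω (b k)) * φ k (ξ ω)) P :=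
      hXk.bdd_mul ((hHk.mono hm).aestronglyMeasurable) hHkb
    have hpull := condExp_stronglyMeasurable_mul_of_bound hm hHk hXk (C * ‖b k‖) hHkb
    calc ∫ ω, (H ω (b k)) * φ k (ξ ω) ∂P
        = ∫ ω, (P[(fun ω => H ω (b k)) * (fun ω => φ k (ξ ω))|m]) ω ∂P := by
          rw [integral_condExp hm]; rfl
      _ = 0 := by
          rw [integral_congr_ae hpull]
          refine integral_eq_zero_of_ae ?_
          filter_upwards [hXc] with ω h
          simp [h]
  calc ∫ ω, H ω (ξ ω) ∂P = ∫ ω, ∑ k, (H ω (b k)) * φ k (ξ ω) ∂P := by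
        congr 1; funext ω; exact hdecomp ω
    _ = ∑ k, ∫ ω, (H ω (b k)) * φ k (ξ ω) ∂P := by
        refine integral_finset_sum _ fun k _ => ?_
        have hXk : Integrable (fun ω => φ k (ξ ω)) P := (φ k).integrable_comp hξi
        have hHk : StronglyMeasurable[m] (fun ω => H ω (b k)) :=
          ((ContinuousLinearMap.apply ℝ ℝ (b k)).continuous).comp_stronglyMeasurable hH
        refine hXk.bdd_mul ((hHk.mono hm).aestronglyMeasurable) (c := C * ‖b k‖) ?_
        filter_upwards [hHb] with ω h
        calc ‖H ω (b k)‖ ≤ ‖H ω‖ * ‖b k‖ := (H ω).le_opNorm _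
          _ ≤ C * ‖b k‖ := by gcongr
    _ = 0 := by simp [hterm]
set_option maxHeartbeats 1000000 in
private lemma aux_step {E : Type*} [NormedAddCommGroup E] [NormedSpace ℝ E]
    [FiniteDimensional ℝ E]
    {Ω : Type*} {𝒢 m0 : MeasurableSpace Ω} (h𝒢 : 𝒢 ≤ m0)
    (P : Measure Ω) [IsProbabilityMeasure P]
    {κ : ℝ} (hκ : 1 ≤ κ) (L : E → E →L[ℝ] ℝ) (hLcont : Continuous L)
    (hsmL : ∀ x y : E, ‖x + y‖ ^ 2 ≤ ‖x‖ ^ 2 + L x y + κ * ‖y‖ ^ 2)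
    (hLb : ∀ x y : E, |L x y| ≤ 2 * ‖x‖ * ‖y‖)
    (hLnorm : ∀ x : E, ‖L x‖ ≤ 2 * ‖x‖)
    {X : Ω → E} (hX : StronglyMeasurable[𝒢] X) {BX : ℝ} (hXb : ∀ᵐ ω ∂P, ‖X ω‖ ≤ BX)
    {ξ : Ω → E} (hξsm0 : StronglyMeasurable[m0] ξ) (hξi : Integrable ξ P)
    (hcond : P[ξ|𝒢] =ᵐ[P] 0) {s : ℝ} (hs : 0 < s) (hξb : ∀ᵐ ω ∂P, ‖ξ ω‖ ≤ s)
    {t : ℝ} (ht : 0 < t) {c : ℝ} (hc : 0 ≤ c) :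
    ∫ ω, Real.exp (t * Real.sqrt (‖X ω + ξ ω‖ ^ 2 + c)) ∂P ≤
      Real.exp (t ^ 2 * s ^ 2 / 2) *
        ∫ ω, Real.exp (t * Real.sqrt (‖X ω‖ ^ 2 + (κ * s ^ 2 + c))) ∂P := by
  classical
  have hκ0 : (0:ℝ) < κ := lt_of_lt_of_le one_pos hκ
  have hX0 : StronglyMeasurable[m0] X := hX.mono h𝒢
  have hBX : 0 ≤ BX := by
    obtain ⟨ω, hω⟩ := hXb.exists
    exact (norm_nonneg _).trans hω
  have hbint : ∀ (f : Ω → ℝ), AEStronglyMeasurable f P → ∀ (c0 : ℝ),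
      (∀ᵐ ω ∂P, |f ω| ≤ c0) → Integrable f P := fun f hf c0 hc0 =>
    (integrable_const c0).mono' hf (hc0.mono fun ω h => by simpa using h)
  set c' : ℝ := κ * s ^ 2 + c with hc'def
  have hc'pos : 0 < c' := by positivity
  set m : Ω → ℝ := fun ω => ‖X ω‖ ^ 2 + c' with hmdef
  have hm0 : ∀ ω, 0 < m ω := fun ω => by positivity
  have hmω : ∀ ω, m ω = ‖X ω‖ ^ 2 + c' := fun _ => rfl
  set d : Ω → ℝ := fun ω => L (X ω) (ξ ω) with hddef
  set Y : Ω → ℝ := fun ω => d ω / (2 * Real.sqrt (m ω)) with hYdef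
  set g1 : Ω → ℝ := fun ω => Real.exp (t * Real.sqrt (m ω)) with hg1def
  -- continuity helpers
  have hc1 : Continuous fun a : ℝ => Real.sqrt (a ^ 2 + c') :=
    Real.continuous_sqrt.comp ((continuous_pow 2).add continuous_const)
  have hc2 : Continuous fun a : ℝ => Real.exp (t * Real.sqrt (a ^ 2 + c')) :=
    Real.continuous_exp.comp (continuous_const.mul hc1)
  have hc3 : Continuous fun a : ℝ =>
      Real.exp (t * Real.sqrt (a ^ 2 + c')) / (2 * Real.sqrt (a ^ 2 + c')) := by
    refine hc2.div (continuous_const.mul hc1) fun a => ?_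
    have : 0 < Real.sqrt (a ^ 2 + c') := Real.sqrt_pos.2 (by positivity)
    positivity
  -- measurability
  have hnormX : StronglyMeasurable[𝒢] fun ω => ‖X ω‖ := hX.norm
  have hg1sm : StronglyMeasurable[𝒢] g1 := hc2.comp_stronglyMeasurable hnormX
  have hg1sm0 : StronglyMeasurable[m0] g1 := hg1sm.mono h𝒢
  have happly : Continuous fun q : (E →L[ℝ] ℝ) × E => q.1 q.2 :=
    isBoundedBilinearMap_apply.continuous
  have hdsm0 : StronglyMeasurable[m0] d :=
    happly.comp_stronglyMeasurable ((hLcont.comp_stronglyMeasurable hX0).prodMk hξsm0)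
  have hmsm0 : StronglyMeasurable[m0] fun ω => 2 * Real.sqrt (m ω) :=
    (continuous_const.mul (Real.continuous_sqrt.comp
      ((continuous_pow 2).add continuous_const))).comp_stronglyMeasurable hX0.norm
  have hYsm0 : StronglyMeasurable[m0] Y :=
    (hdsm0.measurable.div hmsm0.measurable).stronglyMeasurable
  -- the CLM-valued integrand
  set H : Ω → E →L[ℝ] ℝ := fun ω =>
    (Real.exp (t * Real.sqrt (m ω)) / (2 * Real.sqrt (m ω))) • L (X ω) with hHdef
  have hHsm : StronglyMeasurable[𝒢] H :=
    (hc3.comp_stronglyMeasurable hnormX).smul (hLcont.comp_stronglyMeasurable hX)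
  have hsqc' : 0 < Real.sqrt c' := Real.sqrt_pos.2 hc'pos
  set C : ℝ := Real.exp (t * Real.sqrt (BX ^ 2 + c')) / (2 * Real.sqrt c') * (2 * BX)
    with hCdef
  have hmleB : ∀ ω, ‖X ω‖ ≤ BX → Real.sqrt (m ω) ≤ Real.sqrt (BX ^ 2 + c') := by
    intro ω h
    apply Real.sqrt_le_sqrt
    rw [hmω ω]
    have : ‖X ω‖ ^ 2 ≤ BX ^ 2 := by
      apply pow_le_pow_left₀ (norm_nonneg _) h
    linarith
  have hsqm_ge : ∀ ω, Real.sqrt c' ≤ Real.sqrt (m ω) := fun ω =>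
    Real.sqrt_le_sqrt (by rw [hmω ω]; nlinarith [sq_nonneg ‖X ω‖])
  have hHb : ∀ᵐ ω ∂P, ‖H ω‖ ≤ C := by
    filter_upwards [hXb] with ω h
    have h1 : ‖H ω‖ ≤ ‖Real.exp (t * Real.sqrt (m ω)) / (2 * Real.sqrt (m ω))‖
        * ‖L (X ω)‖ := by
      have hHω : H ω = (Real.exp (t * Real.sqrt (m ω)) / (2 * Real.sqrt (m ω))) •
          L (X ω) := rfl
      rw [hHω]
      exact (norm_smul (Real.exp (t * Real.sqrt (m ω)) / (2 * Real.sqrt (m ω))) (L (X ω))).le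
    have h2 : |Real.exp (t * Real.sqrt (m ω)) / (2 * Real.sqrt (m ω))|
        ≤ Real.exp (t * Real.sqrt (BX ^ 2 + c')) / (2 * Real.sqrt c') := by
      have hpos : 0 < Real.sqrt (m ω) := Real.sqrt_pos.2 (hm0 ω)
      rw [abs_of_pos (div_pos (Real.exp_pos _) (by linarith))]
      apply div_le_div₀ (Real.exp_pos _).le
      · exact Real.exp_le_exp.2 (mul_le_mul_of_nonneg_left (hmleB ω h) ht.le)
      · linarith [hsqc']
      · linarith [hsqm_ge ω]
    have h3 : ‖L (X ω)‖ ≤ 2 * BX := (hLnorm _).trans (by linarith)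
    calc ‖H ω‖ ≤ _ := h1
      _ = |Real.exp (t * Real.sqrt (m ω)) / (2 * Real.sqrt (m ω))| * ‖L (X ω)‖ := by
          rw [Real.norm_eq_abs]
      _ ≤ C := by rw [hCdef]; exact mul_le_mul h2 h3 (norm_nonneg _) (by positivity)
  -- pointwise inequality
  have hptwise : ∀ᵐ ω ∂P, Real.exp (t * Real.sqrt (‖X ω + ξ ω‖ ^ 2 + c)) ≤
      Real.cosh (t*s) * g1 ω + (Real.sinh (t*s)/s) * (g1 ω * Y ω) := by
    filter_upwards [hξb] with ω hy
    have hκy : κ * ‖ξ ω‖ ^ 2 ≤ κ * s ^ 2 := by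
      apply mul_le_mul_of_nonneg_left _ hκ0.le
      exact pow_le_pow_left₀ (norm_nonneg _) hy 2
    have h1 : ‖X ω + ξ ω‖ ^ 2 + c ≤ m ω + d ω := by
      have h := hsmL (X ω) (ξ ω)
      rw [hmω ω]
      have hd : d ω = L (X ω) (ξ ω) := rfl
      rw [hd, hc'def]
      linarith
    have hdb : |d ω| ≤ 2 * ‖X ω‖ * s := by
      refine (hLb (X ω) (ξ ω)).trans ?_
      have := norm_nonneg (X ω)
      nlinarith
    have hmpos := hm0 ω
    have hrmpos : 0 < Real.sqrt (m ω) := Real.sqrt_pos.2 hmpos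
    have hxm : ‖X ω‖ ≤ Real.sqrt (m ω) := by
      rw [show (‖X ω‖ : ℝ) = Real.sqrt (‖X ω‖ ^ 2) from
        (Real.sqrt_sq (norm_nonneg _)).symm]
      exact Real.sqrt_le_sqrt (by rw [hmω ω]; nlinarith)
    have hdm : -(m ω) ≤ d ω := by
      have h2 : 2 * ‖X ω‖ * s ≤ m ω := by
        have hA : 2 * ‖X ω‖ * s ≤ ‖X ω‖ ^ 2 + s ^ 2 := by
          nlinarith [sq_nonneg (‖X ω‖ - s)]
        have hBq : s ^ 2 ≤ κ * s ^ 2 := by nlinarith [sq_nonneg s]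
        rw [hmω ω, hc'def]
        linarith
      have := abs_le.1 hdb
      linarith [this.1]
    have hYb : |Y ω| ≤ s := by
      have hYeq : Y ω = d ω / (2 * Real.sqrt (m ω)) := rfl
      rw [hYeq, abs_div, abs_of_pos (show (0:ℝ) < 2 * Real.sqrt (m ω) by linarith [hrmpos]),
        div_le_iff₀ (show (0:ℝ) < 2 * Real.sqrt (m ω) by linarith [hrmpos])]
      calc |d ω| ≤ 2 * ‖X ω‖ * s := hdb
        _ ≤ s * (2 * Real.sqrt (m ω)) := by nlinarith [hxm, hs]
    have hsqrt : Real.sqrt (‖X ω + ξ ω‖ ^ 2 + c) ≤ Real.sqrt (m ω) + Y ω := by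
      calc Real.sqrt (‖X ω + ξ ω‖ ^ 2 + c) ≤ Real.sqrt (m ω + d ω) :=
            Real.sqrt_le_sqrt h1
        _ ≤ Real.sqrt (m ω) + d ω / (2 * Real.sqrt (m ω)) :=
            aux_sqrt_tangent hmpos hdm
        _ = Real.sqrt (m ω) + Y ω := rfl
    have step1 : Real.exp (t * Real.sqrt (‖X ω + ξ ω‖ ^ 2 + c)) ≤
        g1 ω * Real.exp (t * Y ω) := by
      have hg1e : g1 ω = Real.exp (t * Real.sqrt (m ω)) := rfl
      rw [hg1e, ← Real.exp_add]
      apply Real.exp_le_exp.2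
      have := mul_le_mul_of_nonneg_left hsqrt ht.le
      linarith [this]
    have step2 : Real.exp (t * Y ω) ≤
        Real.cosh (t*s) + (Y ω / s) * Real.sinh (t*s) := aux_exp_convex hs hYb
    calc Real.exp (t * Real.sqrt (‖X ω + ξ ω‖ ^ 2 + c))
        ≤ g1 ω * (Real.cosh (t*s) + (Y ω / s) * Real.sinh (t*s)) :=
          step1.trans (mul_le_mul_of_nonneg_left step2 (Real.exp_pos _).le)
      _ = Real.cosh (t*s) * g1 ω + (Real.sinh (t*s)/s) * (g1 ω * Y ω) := by
          field_simp
  -- integrability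
  have hfint : Integrable (fun ω => Real.exp (t * Real.sqrt (‖X ω + ξ ω‖ ^ 2 + c))) P := by
    refine hbint _ ?_ (Real.exp (t * Real.sqrt ((BX + s) ^ 2 + c))) ?_
    · exact ((Real.continuous_exp.comp (continuous_const.mul
        (Real.continuous_sqrt.comp ((continuous_pow 2).add
        continuous_const)))).comp_stronglyMeasurable (hX0.add hξsm0).norm).aestronglyMeasurable
    · filter_upwards [hXb, hξb] with ω h hy
      rw [abs_of_pos (Real.exp_pos _)]
      apply Real.exp_le_exp.2
      apply mul_le_mul_of_nonneg_left _ ht.le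
      apply Real.sqrt_le_sqrt
      have hna : ‖X ω + ξ ω‖ ≤ BX + s := (norm_add_le _ _).trans (by linarith)
      have := pow_le_pow_left₀ (norm_nonneg (X ω + ξ ω)) hna 2
      linarith
  have hg1b : ∀ᵐ ω ∂P, |g1 ω| ≤ Real.exp (t * Real.sqrt (BX ^ 2 + c')) := by
    filter_upwards [hXb] with ω h
    rw [abs_of_pos (Real.exp_pos _)]
    exact Real.exp_le_exp.2 (mul_le_mul_of_nonneg_left (hmleB ω h) ht.le)
  have hg1int : Integrable g1 P :=
    hbint _ hg1sm0.aestronglyMeasurable _ hg1b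
  have hg1Yint : Integrable (fun ω => g1 ω * Y ω) P := by
    refine hbint _ (hg1sm0.mul hYsm0).aestronglyMeasurable
      (Real.exp (t * Real.sqrt (BX ^ 2 + c')) * s) ?_
    filter_upwards [hg1b, hξb] with ω h1 hy
    rw [abs_mul]
    have hmpos := hm0 ω
    have hrmpos : 0 < Real.sqrt (m ω) := Real.sqrt_pos.2 hmpos
    have hxm : ‖X ω‖ ≤ Real.sqrt (m ω) := by
      rw [show (‖X ω‖ : ℝ) = Real.sqrt (‖X ω‖ ^ 2) from
        (Real.sqrt_sq (norm_nonneg _)).symm]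
      exact Real.sqrt_le_sqrt (by rw [hmω ω]; nlinarith)
    have hdb : |d ω| ≤ 2 * ‖X ω‖ * s := by
      refine (hLb (X ω) (ξ ω)).trans ?_
      have := norm_nonneg (X ω)
      nlinarith
    have hYb : |Y ω| ≤ s := by
      have hYeq : Y ω = d ω / (2 * Real.sqrt (m ω)) := rfl
      rw [hYeq, abs_div, abs_of_pos (show (0:ℝ) < 2 * Real.sqrt (m ω) by linarith [hrmpos]),
        div_le_iff₀ (show (0:ℝ) < 2 * Real.sqrt (m ω) by linarith [hrmpos])]
      calc |d ω| ≤ 2 * ‖X ω‖ * s := hdb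
        _ ≤ s * (2 * Real.sqrt (m ω)) := by nlinarith [hxm, hs]
    exact mul_le_mul h1 hYb (abs_nonneg _) (Real.exp_pos _).le
  -- the zero integral
  have hzero : ∫ ω, g1 ω * Y ω ∂P = 0 := by
    have heq : (fun ω => g1 ω * Y ω) = fun ω => H ω (ξ ω) := by
      funext ω
      have h1 : H ω (ξ ω) =
          (Real.exp (t * Real.sqrt (m ω)) / (2 * Real.sqrt (m ω))) * d ω := rfl
      have hg1e : g1 ω = Real.exp (t * Real.sqrt (m ω)) := rfl
      have hYe : Y ω = d ω / (2 * Real.sqrt (m ω)) := rfl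
      rw [h1, hg1e, hYe]
      ring
    rw [heq]
    exact aux_integral_mul_eq_zero h𝒢 hξi hcond hHsm C hHb
  -- put it together
  have hstep : ∫ ω, Real.exp (t * Real.sqrt (‖X ω + ξ ω‖ ^ 2 + c)) ∂P
      ≤ Real.cosh (t*s) * ∫ ω, g1 ω ∂P := by
    have h1 : ∫ ω, Real.exp (t * Real.sqrt (‖X ω + ξ ω‖ ^ 2 + c)) ∂P ≤
        ∫ ω, (Real.cosh (t*s) * g1 ω + (Real.sinh (t*s)/s) * (g1 ω * Y ω)) ∂P :=
      integral_mono_ae hfint ((hg1int.const_mul _).add (hg1Yint.const_mul _)) hptwise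
    rw [integral_add (hg1int.const_mul _) (hg1Yint.const_mul _),
      integral_const_mul, integral_const_mul, hzero, mul_zero, add_zero] at h1
    exact h1
  have hcosh : Real.cosh (t*s) ≤ Real.exp (t ^ 2 * s ^ 2 / 2) := by
    calc Real.cosh (t*s) ≤ Real.exp ((t*s) ^ 2 / 2) := Real.cosh_le_exp_half_sq _
      _ = Real.exp (t ^ 2 * s ^ 2 / 2) := by rw [mul_pow]
  have hg1nonneg : 0 ≤ ∫ ω, g1 ω ∂P := integral_nonneg fun ω => (Real.exp_pos _).le
  calc ∫ ω, Real.exp (t * Real.sqrt (‖X ω + ξ ω‖ ^ 2 + c)) ∂P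
      ≤ Real.cosh (t*s) * ∫ ω, g1 ω ∂P := hstep
    _ ≤ Real.exp (t ^ 2 * s ^ 2 / 2) * ∫ ω, g1 ω ∂P :=
        mul_le_mul_of_nonneg_right hcosh hg1nonneg
    _ = Real.exp (t ^ 2 * s ^ 2 / 2) *
        ∫ ω, Real.exp (t * Real.sqrt (‖X ω‖ ^ 2 + (κ * s ^ 2 + c))) ∂P := rfl
set_option maxHeartbeats 1000000 in
theorem martingale_deviation_smooth_space {E : Type*} [NormedAddCommGroup E]
    [NormedSpace ℝ E] [FiniteDimensional ℝ E]
    {Ω : Type*} {m0 : MeasurableSpace Ω}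
    (P : Measure Ω) [IsProbabilityMeasure P] (ℱ : Filtration ℕ m0)
    (κ : ℝ) (hκ : 1 ≤ κ)
    (hC1 : ContDiff ℝ 1 (fun x : E => ‖x‖ ^ 2))
    (hsm : ∀ x y : E, ‖x + y‖ ^ 2 ≤
      ‖x‖ ^ 2 + fderiv ℝ (fun z : E => ‖z‖ ^ 2) x y + κ * ‖y‖ ^ 2)
    (ξ : ℕ → Ω → E) (σ : ℕ → ℝ) (hσ : ∀ i, 0 < σ i)
    (hmeas : ∀ i, StronglyMeasurable[ℱ i] (ξ i))
    (hint : ∀ i, Integrable (ξ i) P)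
    (hmd : ∀ i, 1 ≤ i → P[ξ i | ℱ (i - 1)] =ᵐ[P] 0)
    (hbdd : ∀ i, 1 ≤ i → ∀ᵐ ω ∂P, ‖ξ i ω‖ ≤ σ i)
    (N : ℕ) (hN : 1 ≤ N) (γ : ℝ) (hγ : 0 ≤ γ) :
    P {ω | ‖∑ i ∈ Finset.Icc 1 N, ξ i ω‖ ≥
        (Real.sqrt κ + γ) * Real.sqrt (∑ i ∈ Finset.Icc 1 N, (σ i) ^ 2)} ≤
      ENNReal.ofReal (Real.exp (-γ ^ 2 / 2)) := by
  classical
  have hκ0 : (0:ℝ) < κ := lt_of_lt_of_le one_pos hκ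
  set L : E → (E →L[ℝ] ℝ) := fderiv ℝ (fun z : E => ‖z‖ ^ 2) with hL
  have hLcont : Continuous L := hC1.continuous_fderiv one_ne_zero
  have hLb : ∀ x y : E, |L x y| ≤ 2 * ‖x‖ * ‖y‖ := aux_fderiv_bound hκ0 hsm
  have hLnorm : ∀ x : E, ‖L x‖ ≤ 2 * ‖x‖ := fun x =>
    ContinuousLinearMap.opNorm_le_bound _ (by positivity) fun y => by
      rw [Real.norm_eq_abs, mul_assoc]
      exact (hLb x y).trans (le_of_eq (mul_assoc _ _ _))
  set S : ℕ → Ω → E := fun j ω => ∑ i ∈ Finset.Icc 1 j, ξ i ω with hS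
  set v : ℕ → ℝ := fun j => ∑ i ∈ Finset.Icc 1 j, σ i ^ 2 with hv
  have hSsm : ∀ j, StronglyMeasurable[ℱ j] (S j) := fun j =>
    Finset.stronglyMeasurable_fun_sum _ fun i hi =>
      (hmeas i).mono (ℱ.mono (Finset.mem_Icc.1 hi).2)
  have hSsm0 : ∀ j, StronglyMeasurable[m0] (S j) := fun j => (hSsm j).mono (ℱ.le j)
  have hbdd' : ∀ᵐ ω ∂P, ∀ i, 1 ≤ i → ‖ξ i ω‖ ≤ σ i := by
    rw [ae_all_iff]
    intro i
    rcases Nat.lt_or_ge i 1 with hi | hi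
    · exact Filter.Eventually.of_forall fun ω h => absurd h (by omega)
    · filter_upwards [hbdd i hi] with ω h _
      exact h
  set B : ℕ → ℝ := fun j => ∑ i ∈ Finset.Icc 1 j, σ i with hB
  have hSbd : ∀ᵐ ω ∂P, ∀ j, ‖S j ω‖ ≤ B j := by
    filter_upwards [hbdd'] with ω h j
    exact (norm_sum_le _ _).trans (Finset.sum_le_sum fun i hi => h i (Finset.mem_Icc.1 hi).1)
  have hbint : ∀ (f : Ω → ℝ), AEStronglyMeasurable f P → ∀ (c : ℝ),
      (∀ᵐ ω ∂P, |f ω| ≤ c) → Integrable f P := fun f hf c hc =>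
    (integrable_const c).mono' hf (hc.mono fun ω h => by simpa using h)
  rcases eq_or_lt_of_le hγ with rfl | hγpos
  · simpa using prob_le_one
  have hvN : 0 < v N := Finset.sum_pos (fun i _ => pow_pos (hσ i) 2)
    ⟨1, Finset.mem_Icc.2 ⟨le_rfl, hN⟩⟩
  have hrN : 0 < Real.sqrt (v N) := Real.sqrt_pos.2 hvN
  set t : ℝ := γ / Real.sqrt (v N) with htdef
  have ht : 0 < t := div_pos hγpos hrN
  -- the key induction
  have key : ∀ j, ∀ c : ℝ, 0 ≤ c →
      ∫ ω, Real.exp (t * Real.sqrt (‖S j ω‖ ^ 2 + c)) ∂P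
        ≤ Real.exp (t * Real.sqrt (κ * v j + c) + t ^ 2 * v j / 2) := by
    intro j
    induction j with
    | zero =>
      intro c hc
      have h0 : Finset.Icc 1 0 = (∅ : Finset ℕ) := Finset.Icc_eq_empty (by omega)
      have hS0 : ∀ ω : Ω, S 0 ω = 0 := fun ω => by simp [hS, h0]
      have hv0 : v 0 = 0 := by simp [hv, h0]
      simp only [hv0, mul_zero, zero_add, zero_div, add_zero]
      have : ∀ ω : Ω, Real.exp (t * Real.sqrt (‖S 0 ω‖ ^ 2 + c))
          = Real.exp (t * Real.sqrt c) := fun ω => by rw [hS0 ω]; simp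
      rw [integral_congr_ae (Filter.Eventually.of_forall this), integral_const]
      simp
    | succ j ih =>
      intro c hc
      have hone : (1:ℕ) ≤ j + 1 := by omega
      have hsplit : ∀ ω : Ω, S (j+1) ω = S j ω + ξ (j+1) ω := fun ω =>
        Finset.sum_Icc_succ_top hone _
      have hvsucc : v (j+1) = v j + σ (j+1) ^ 2 := Finset.sum_Icc_succ_top hone _
      have hmdj : P[ξ (j+1) | ℱ j] =ᵐ[P] 0 := by
        simpa using hmd (j+1) (Nat.le_add_left 1 j)
      have hXb : ∀ᵐ ω ∂P, ‖S j ω‖ ≤ B j := hSbd.mono fun ω h => h j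
      have hξb : ∀ᵐ ω ∂P, ‖ξ (j+1) ω‖ ≤ σ (j+1) := hbdd (j+1) hone
      have hstep := aux_step (ℱ.le j) P hκ L hLcont hsm hLb hLnorm (hSsm j) hXb
        ((hmeas (j+1)).mono (ℱ.le (j+1))) (hint (j+1)) hmdj (hσ (j+1)) hξb ht hc
      simp only [hsplit]
      calc ∫ ω, Real.exp (t * Real.sqrt (‖S j ω + ξ (j+1) ω‖ ^ 2 + c)) ∂P
          ≤ Real.exp (t ^ 2 * σ (j+1) ^ 2 / 2) *
            ∫ ω, Real.exp (t * Real.sqrt (‖S j ω‖ ^ 2 + (κ * σ (j+1) ^ 2 + c))) ∂P := hstep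
        _ ≤ Real.exp (t ^ 2 * σ (j+1) ^ 2 / 2) *
            Real.exp (t * Real.sqrt (κ * v j + (κ * σ (j+1) ^ 2 + c)) + t ^ 2 * v j / 2) := by
            exact mul_le_mul_of_nonneg_left
              (ih _ (add_nonneg (mul_nonneg hκ0.le (sq_nonneg _)) hc)) (Real.exp_pos _).le
        _ = Real.exp (t * Real.sqrt (κ * v (j+1) + c) + t ^ 2 * v (j+1) / 2) := by
            rw [← Real.exp_add]
            congr 1
            have hvv : κ * v (j+1) + c = κ * v j + (κ * σ (j+1) ^ 2 + c) := by
              rw [hvsucc]; ring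
            rw [hvv, hvsucc]
            ring
  -- conclusion
  have hmain := key N 0 le_rfl
  have heq0 : (fun ω => Real.exp (t * Real.sqrt (‖S N ω‖ ^ 2 + 0)))
      = fun ω => Real.exp (t * ‖S N ω‖) := by
    funext ω
    rw [add_zero, Real.sqrt_sq (norm_nonneg _)]
  rw [heq0, add_zero] at hmain
  have hXint : Integrable (fun ω => Real.exp (t * ‖S N ω‖)) P := by
    refine hbint _ ?_ (Real.exp (t * B N)) ?_
    · exact ((Real.continuous_exp.comp
        (continuous_const.mul continuous_id)).comp_stronglyMeasurable
        (hSsm0 N).norm).aestronglyMeasurable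
    · filter_upwards [hSbd] with ω h
      rw [abs_of_pos (Real.exp_pos _)]
      exact Real.exp_le_exp.2 (mul_le_mul_of_nonneg_left (h N) ht.le)
  set ε : ℝ := (Real.sqrt κ + γ) * Real.sqrt (v N) with hεdef
  have hcher := ProbabilityTheory.measure_ge_le_exp_mul_mgf
    (X := fun ω => ‖S N ω‖) (μ := P) (t := t) ε ht.le hXint
  have hmgf : ProbabilityTheory.mgf (fun ω => ‖S N ω‖) P t
      = ∫ ω, Real.exp (t * ‖S N ω‖) ∂P := rfl
  have harith : Real.exp (-t * ε) *
      Real.exp (t * Real.sqrt (κ * v N) + t ^ 2 * v N / 2)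
      = Real.exp (-γ ^ 2 / 2) := by
    rw [← Real.exp_add]
    congr 1
    have h1 : Real.sqrt (κ * v N) = Real.sqrt κ * Real.sqrt (v N) :=
      Real.sqrt_mul hκ0.le _
    have h2 : Real.sqrt (v N) ^ 2 = v N := Real.sq_sqrt hvN.le
    rw [hεdef, h1, htdef, ← h2]
    field_simp
    rw [Real.sqrt_sq (Real.sqrt_nonneg (v N))]
    ring
  have htail : (P {ω | ε ≤ ‖S N ω‖}).toReal ≤ Real.exp (-γ ^ 2 / 2) := by
    refine hcher.trans ?_
    rw [hmgf, ← harith]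
    exact mul_le_mul_of_nonneg_left hmain (Real.exp_pos _).le
  exact (ENNReal.le_ofReal_iff_toReal_le (measure_ne_top _ _) (Real.exp_nonneg _)).2 htail
end
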